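/- arXiv:2305.17643 — 5 statements merged into one kernel-verified Lean document; each statement's English description precedes it below -/
import Mathlib

section
/- (Proposition S2, semiparametric efficiency bound for the average causal effect on the treated: second-moment formula.) Assume e := P(Z=1) > 0 and let τ_T = E[Y(1) − Y(0) ∣ Z=1]. Define φ_T = Z·(Y − ε0(X)·μ0(X) − τ_T)/e + ε0(X)·e(X)·(1−Z)·(Y − μ0(X)) / (e·(1−e(X))). Assume Z·Y and (1−Z)·Y are square-integrable together with all displayed integrands, and let v1(X), v0(X) be 𝔛-measurable conditional variances satisfying v1(X)·e(X) = E[Z·(Y−μ1(X))² ∣ 𝔛] and v0(X)·(1−e(X)) = E[(1−Z)·(Y−μ0(X))² ∣ 𝔛] almost surely. Then E[φ_T²] = E[ e(X)·v1(X)/e² + e(X)²·ε0(X)²·v0(X)/(e²·(1−e(X))) ] + E[ e(X)·(μ1(X) − ε0(X)·μ0(X) − τ_T)²/e² ]. -/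
open MeasureTheory


open MeasureTheory Filter

/-- Tower-property integrability: if `h ≥ 0` is `mX`-measurable, `0 ≤ K ≤ 1`, and
`h * P[K|mX]` is integrable, then `h * K` is integrable. -/
lemma aux_tower {Ω : Type*} [F : MeasurableSpace Ω] {P : Measure Ω} [IsProbabilityMeasure P]
    {mX : MeasurableSpace Ω} (hmX : mX ≤ F) {h K : Ω → ℝ}
    (hhm : Measurable[mX] h) (hh0 : ∀ ω, 0 ≤ h ω)
    (hKm : Measurable[F] K) (hK0 : ∀ ω, 0 ≤ K ω) (hK1 : ∀ ω, K ω ≤ 1)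
    (hint : Integrable (fun ω => h ω * (P[K|mX]) ω) P) :
    Integrable (fun ω => h ω * K ω) P := by
  have hhF : Measurable[F] h := hhm.mono hmX le_rfl
  have hKint : Integrable K P := by
    refine (integrable_const (1 : ℝ)).mono' hKm.aestronglyMeasurable ?_
    exact Eventually.of_forall fun ω => by
      rw [Real.norm_eq_abs, abs_of_nonneg (hK0 ω)]; exact hK1 ω
  have hk0 : 0 ≤ᵐ[P] P[K|mX] := condExp_nonneg (Eventually.of_forall hK0)
  set hn : ℕ → Ω → ℝ := fun n ω => min (h ω) n with hn_def
  have hnm : ∀ n, Measurable[mX] (hn n) := fun n => hhm.min measurable_const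
  have hn0 : ∀ n ω, 0 ≤ hn n ω := fun n ω => le_min (hh0 ω) (Nat.cast_nonneg n)
  have hnle : ∀ n ω, hn n ω ≤ h ω := fun n ω => min_le_left _ _
  have h_int_n : ∀ n, Integrable (fun ω => hn n ω * K ω) P := by
    intro n
    refine (integrable_const ((n : ℝ))).mono'
      (((hnm n).mono hmX le_rfl).mul hKm).aestronglyMeasurable ?_
    refine Eventually.of_forall fun ω => ?_
    rw [Real.norm_eq_abs, abs_of_nonneg (mul_nonneg (hn0 n ω) (hK0 ω))]
    calc hn n ω * K ω ≤ hn n ω * 1 :=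
          mul_le_mul_of_nonneg_left (hK1 ω) (hn0 n ω)
      _ ≤ n := by rw [mul_one]; exact min_le_right _ _
  have h_int_n' : ∀ n, Integrable (fun ω => hn n ω * (P[K|mX]) ω) P := by
    intro n
    refine hint.mono' (((hnm n).mono hmX le_rfl).aestronglyMeasurable.mul
      (stronglyMeasurable_condExp.mono hmX).aestronglyMeasurable) ?_
    filter_upwards [hk0] with ω hkω
    rw [Real.norm_eq_abs, abs_of_nonneg (mul_nonneg (hn0 n ω) hkω)]
    exact mul_le_mul_of_nonneg_right (hnle n ω) hkω
  have h_eq : ∀ n, ∫ ω, hn n ω * K ω ∂P = ∫ ω, hn n ω * (P[K|mX]) ω ∂P := by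
    intro n
    have hpull : P[fun ω => hn n ω * K ω|mX] =ᵐ[P] fun ω => hn n ω * (P[K|mX]) ω :=
      condExp_mul_of_stronglyMeasurable_left (hnm n).stronglyMeasurable (h_int_n n) hKint
    calc ∫ ω, hn n ω * K ω ∂P = ∫ ω, (P[fun ω' => hn n ω' * K ω'|mX]) ω ∂P :=
          (integral_condExp hmX).symm
      _ = ∫ ω, hn n ω * (P[K|mX]) ω ∂P := integral_congr_ae hpull
  have h_le : ∀ n, ∫ ω, hn n ω * K ω ∂P ≤ ∫ ω, h ω * (P[K|mX]) ω ∂P := by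
    intro n
    rw [h_eq n]
    refine integral_mono_ae (h_int_n' n) hint ?_
    filter_upwards [hk0] with ω hkω
    exact mul_le_mul_of_nonneg_right (hnle n ω) hkω
  refine ⟨(hhF.mul hKm).aestronglyMeasurable, ?_⟩
  rw [hasFiniteIntegral_iff_ofReal
    (Eventually.of_forall fun ω => mul_nonneg (hh0 ω) (hK0 ω))]
  have hmeas_n : ∀ n, Measurable[F] fun ω => ENNReal.ofReal (hn n ω * K ω) := fun n =>
    (((hnm n).mono hmX le_rfl).mul hKm).ennreal_ofReal
  have hlim : ∀ ω, Tendsto (fun n => ENNReal.ofReal (hn n ω * K ω)) atTop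
      (nhds (ENNReal.ofReal (h ω * K ω))) := by
    intro ω
    have hev : ∀ᶠ n in atTop, ENNReal.ofReal (hn n ω * K ω)
        = ENNReal.ofReal (h ω * K ω) := by
      filter_upwards [eventually_ge_atTop ⌈h ω⌉₊] with n hge
      have : hn n ω = h ω := min_eq_left ((Nat.le_ceil _).trans (by exact_mod_cast hge))
      rw [this]
    exact Tendsto.congr' (hev.mono fun n hn => hn.symm) tendsto_const_nhds
  have hbound : ∀ n, ∫⁻ ω, ENNReal.ofReal (hn n ω * K ω) ∂P
      ≤ ENNReal.ofReal (∫ ω, h ω * (P[K|mX]) ω ∂P) := by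
    intro n
    rw [← ofReal_integral_eq_lintegral_ofReal (h_int_n n)
      (Eventually.of_forall fun ω => mul_nonneg (hn0 n ω) (hK0 ω))]
    exact ENNReal.ofReal_le_ofReal (h_le n)
  calc ∫⁻ ω, ENNReal.ofReal (h ω * K ω) ∂P
      = ∫⁻ ω, liminf (fun n => ENNReal.ofReal (hn n ω * K ω)) atTop ∂P :=
        lintegral_congr fun ω => ((hlim ω).liminf_eq).symm
    _ ≤ liminf (fun n => ∫⁻ ω, ENNReal.ofReal (hn n ω * K ω) ∂P) atTop :=
        lintegral_liminf_le hmeas_n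
    _ ≤ ENNReal.ofReal (∫ ω, h ω * (P[K|mX]) ω ∂P) := by
        refine liminf_le_of_frequently_le ?_
        exact Frequently.of_forall hbound
    _ < ⊤ := ENNReal.ofReal_lt_top

open MeasureTheory Filter

/-- Conditional Cauchy–Schwarz for an "indicator-like" weight `K`. -/
lemma aux_cs {Ω : Type*} [F : MeasurableSpace Ω] {P : Measure Ω} [IsProbabilityMeasure P]
    {mX : MeasurableSpace Ω} (hmX : mX ≤ F) {G K : Ω → ℝ}
    (hG : Integrable G P) (hG2 : Integrable (fun ω => (G ω) ^ 2) P)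
    (hK : Integrable K P)
    (hKG : ∀ ω, K ω * G ω = G ω) (hKK : ∀ ω, K ω * K ω = K ω) :
    ∀ᵐ ω ∂P, ((P[G|mX]) ω) ^ 2 ≤ (P[K|mX]) ω * (P[fun ω' => (G ω') ^ 2|mX]) ω := by
  have key : ∀ q : ℚ, ∀ᵐ ω ∂P, 0 ≤ (P[fun ω' => (G ω') ^ 2|mX]) ω
      - 2 * (q : ℝ) * (P[G|mX]) ω + (q : ℝ) ^ 2 * (P[K|mX]) ω := by
    intro q
    set c : ℝ := (q : ℝ) with hc
    have hexp : ∀ ω, (G ω - c * K ω) ^ 2 = (G ω) ^ 2 - (2 * c) * G ω + c ^ 2 * K ω := by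
      intro ω
      have h1 : (G ω - c * K ω) ^ 2
          = (G ω) ^ 2 - (2 * c) * (K ω * G ω) + c ^ 2 * (K ω * K ω) := by ring
      rw [h1, hKG ω, hKK ω]
    have hf_int : Integrable (fun ω => (G ω) ^ 2 - (2 * c) * G ω + c ^ 2 * K ω) P :=
      (hG2.sub (hG.const_mul (2 * c))).add (hK.const_mul (c ^ 2))
    have hnn : 0 ≤ᵐ[P] P[fun ω => (G ω) ^ 2 - (2 * c) * G ω + c ^ 2 * K ω|mX] := by
      refine condExp_nonneg (Eventually.of_forall fun ω => ?_)
      dsimp only; rw [← hexp ω]; positivity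
    have hlin : P[fun ω => (G ω) ^ 2 - (2 * c) * G ω + c ^ 2 * K ω|mX]
        =ᵐ[P] fun ω => (P[fun ω' => (G ω') ^ 2|mX]) ω - (2 * c) * (P[G|mX]) ω
          + c ^ 2 * (P[K|mX]) ω := by
      have h1 := condExp_add (μ := P) (m := mX)
        (hG2.sub (hG.const_mul (2 * c))) (hK.const_mul (c ^ 2))
      have h2 := condExp_sub (μ := P) (m := mX) hG2 (hG.const_mul (2 * c))
      have h3 : P[fun ω => (2 * c) * G ω|mX] =ᵐ[P] fun ω => (2 * c) * (P[G|mX]) ω := by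
        simpa [smul_eq_mul, Pi.smul_def] using condExp_smul (μ := P) (m := mX) (2 * c) G
      have h4 : P[fun ω => c ^ 2 * K ω|mX] =ᵐ[P] fun ω => c ^ 2 * (P[K|mX]) ω := by
        simpa [smul_eq_mul, Pi.smul_def] using condExp_smul (μ := P) (m := mX) (c ^ 2) K
      have h0 : (fun ω => (G ω) ^ 2 - (2 * c) * G ω + c ^ 2 * K ω)
          = (((fun ω => (G ω) ^ 2) - fun ω => (2 * c) * G ω) + fun ω => c ^ 2 * K ω) := rfl
      rw [h0]
      refine h1.trans ?_
      filter_upwards [h2, h3, h4] with ω e2 e3 e4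
      simp only [Pi.add_apply, Pi.sub_apply] at e2 ⊢
      rw [e2, e3, e4]
    filter_upwards [hnn, hlin] with ω h1 h2
    simp only [Pi.zero_apply] at h1
    rw [h2] at h1
    linarith [h1]
  have key' := ae_all_iff.mpr key
  filter_upwards [key'] with ω hω
  set A := (P[fun ω' => (G ω') ^ 2|mX]) ω
  set B := (P[G|mX]) ω
  set C := (P[K|mX]) ω
  have hall : ∀ x : ℝ, 0 ≤ C * (x * x) + (-2 * B) * x + A := by
    have hsub : Set.range ((↑) : ℚ → ℝ) ⊆ {x : ℝ | 0 ≤ C * (x * x) + (-2 * B) * x + A} := by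
      rintro _ ⟨q, rfl⟩
      have := hω q
      simp only [Set.mem_setOf_eq]
      nlinarith [this]
    have hclosed : IsClosed {x : ℝ | 0 ≤ C * (x * x) + (-2 * B) * x + A} :=
      isClosed_le continuous_const (by continuity)
    intro x
    have hx : x ∈ closure (Set.range ((↑) : ℚ → ℝ)) := by
      rw [Rat.denseRange_cast.closure_eq]; trivial
    exact closure_minimal hsub hclosed hx
  have hd := discrim_le_zero hall
  rw [discrim] at hd
  nlinarith [hd]

open ProbabilityTheory in
set_option maxHeartbeats 2000000 in
/-- Proposition S2 (semiparametric efficiency bound for the average causal effect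
on the treated: second-moment formula). -/
theorem semiparametric_bound_att
    {Ω : Type*} [F : MeasurableSpace Ω] (P : Measure Ω) [IsProbabilityMeasure P]
    (Z Y1 Y0 Y : Ω → ℝ)
    (hZmeas : Measurable Z) (hZ01 : ∀ ω, Z ω = 0 ∨ Z ω = 1)
    (hY1int : Integrable Y1 P) (hY0int : Integrable Y0 P)
    (hYdef : ∀ ω, Y ω = Z ω * Y1 ω + (1 - Z ω) * Y0 ω)
    (mX : MeasurableSpace Ω) (hmX : mX ≤ F)
    (eX : Ω → ℝ) (heXmeas : Measurable[mX] eX) (heX : eX =ᵐ[P] P[Z|mX])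
    (hov : ∀ᵐ ω ∂P, 0 < eX ω ∧ eX ω < 1)
    (mu0 : Ω → ℝ) (hmu0meas : Measurable[mX] mu0)
    (hmu0 : (fun ω => mu0 ω * (1 - eX ω)) =ᵐ[P] P[fun ω => (1 - Z ω) * Y ω|mX])
    (eps0 : Ω → ℝ) (heps0meas : Measurable[mX] eps0)
    (heps0pos : ∀ᵐ ω ∂P, 0 < eps0 ω)
    (hsens0 : ∀ᵐ ω ∂P, (1 - eX ω) * (P[fun ω' => Z ω' * Y0 ω'|mX]) ω
        = eps0 ω * eX ω * (P[fun ω' => (1 - Z ω') * Y0 ω'|mX]) ω)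
    (mu1 : Ω → ℝ) (hmu1meas : Measurable[mX] mu1)
    (hmu1 : (fun ω => mu1 ω * eX ω) =ᵐ[P] P[fun ω => Z ω * Y ω|mX])
    (he : 0 < P {ω | Z ω = 1})
    (e tauT : ℝ) (he_def : e = (P {ω | Z ω = 1}).toReal)
    (htauT : tauT = ∫ ω, (Y1 ω - Y0 ω) ∂(ProbabilityTheory.cond P {ω | Z ω = 1}))
    (hsqZ : Integrable (fun ω => (Z ω * Y ω) ^ 2) P)
    (hsq1mZ : Integrable (fun ω => ((1 - Z ω) * Y ω) ^ 2) P)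
    (v1 v0 : Ω → ℝ) (hv1meas : Measurable[mX] v1) (hv0meas : Measurable[mX] v0)
    (hv1 : (fun ω => v1 ω * eX ω)
        =ᵐ[P] P[fun ω => Z ω * (Y ω - mu1 ω) ^ 2|mX])
    (hv0 : (fun ω => v0 ω * (1 - eX ω))
        =ᵐ[P] P[fun ω => (1 - Z ω) * (Y ω - mu0 ω) ^ 2|mX])
    (hintphi : Integrable (fun ω =>
      (Z ω * (Y ω - eps0 ω * mu0 ω - tauT) / e
        + eps0 ω * eX ω * ((1 - Z ω) * (Y ω - mu0 ω)) / (e * (1 - eX ω))) ^ 2) P)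
    (hintv : Integrable (fun ω =>
      eX ω * v1 ω / e ^ 2
        + eX ω ^ 2 * eps0 ω ^ 2 * v0 ω / (e ^ 2 * (1 - eX ω))) P)
    (hintm : Integrable (fun ω =>
      eX ω * (mu1 ω - eps0 ω * mu0 ω - tauT) ^ 2 / e ^ 2) P) :
    ∫ ω, (Z ω * (Y ω - eps0 ω * mu0 ω - tauT) / e
        + eps0 ω * eX ω * ((1 - Z ω) * (Y ω - mu0 ω)) / (e * (1 - eX ω))) ^ 2 ∂P
      = ∫ ω, (eX ω * v1 ω / e ^ 2
            + eX ω ^ 2 * eps0 ω ^ 2 * v0 ω / (e ^ 2 * (1 - eX ω))) ∂P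
        + ∫ ω, eX ω * (mu1 ω - eps0 ω * mu0 ω - tauT) ^ 2 / e ^ 2 ∂P := by
  -- basic positivity
  have he0 : 0 < e := by
    rw [he_def]; exact ENNReal.toReal_pos he.ne' (measure_ne_top P _)
  have he2 : (e : ℝ) ^ 2 ≠ 0 := pow_ne_zero 2 he0.ne'
  have hZnn : ∀ ω, 0 ≤ Z ω := fun ω => by rcases hZ01 ω with h | h <;> simp [h]
  have hZle1 : ∀ ω, Z ω ≤ 1 := fun ω => by rcases hZ01 ω with h | h <;> simp [h]
  have h1Znn : ∀ ω, 0 ≤ 1 - Z ω := fun ω => by linarith [hZle1 ω]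
  have h1Zle1 : ∀ ω, 1 - Z ω ≤ 1 := fun ω => by linarith [hZnn ω]
  have hZZ : ∀ ω, Z ω * Z ω = Z ω := fun ω => by rcases hZ01 ω with h | h <;> simp [h]
  -- measurability
  have hYae : AEMeasurable Y P := by
    have h1 : AEMeasurable (fun ω => Z ω * Y1 ω + (1 - Z ω) * Y0 ω) P :=
      (hZmeas.aemeasurable.mul hY1int.aemeasurable).add
        ((measurable_const.sub hZmeas).aemeasurable.mul hY0int.aemeasurable)
    exact h1.congr (Filter.Eventually.of_forall fun ω => (hYdef ω).symm)
  have hmu1F : Measurable[F] mu1 := hmu1meas.mono hmX le_rfl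
  have hmu0F : Measurable[F] mu0 := hmu0meas.mono hmX le_rfl
  have heXF : Measurable[F] eX := heXmeas.mono hmX le_rfl
  have heps0F : Measurable[F] eps0 := heps0meas.mono hmX le_rfl
  have hv1F : Measurable[F] v1 := hv1meas.mono hmX le_rfl
  have hv0F : Measurable[F] v0 := hv0meas.mono hmX le_rfl
  have h1ZmF : Measurable[F] (fun ω => 1 - Z ω) := measurable_const.sub hZmeas
  have ham : Measurable[mX] (fun ω => mu1 ω - eps0 ω * mu0 ω - tauT) :=
    (hmu1meas.sub (heps0meas.mul hmu0meas)).sub measurable_const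
  have ha2m : Measurable[mX] (fun ω => (mu1 ω - eps0 ω * mu0 ω - tauT) ^ 2) :=
    ham.pow_const 2
  have hamF : Measurable[F] (fun ω => mu1 ω - eps0 ω * mu0 ω - tauT) :=
    ham.mono hmX le_rfl
  have hcm : Measurable[mX] (fun ω => eps0 ω ^ 2 * eX ω ^ 2 / (e ^ 2 * (1 - eX ω) ^ 2)) :=
    ((heps0meas.pow_const 2).mul (heXmeas.pow_const 2)).div
      (measurable_const.mul ((measurable_const.sub heXmeas).pow_const 2))
  have hcF : Measurable[F] (fun ω => eps0 ω ^ 2 * eX ω ^ 2 / (e ^ 2 * (1 - eX ω) ^ 2)) :=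
    hcm.mono hmX le_rfl
  -- pointwise expansion of the square
  have hpt : ∀ ω, (Z ω * (Y ω - eps0 ω * mu0 ω - tauT) / e
        + eps0 ω * eX ω * ((1 - Z ω) * (Y ω - mu0 ω)) / (e * (1 - eX ω))) ^ 2
      = Z ω * (Y ω - eps0 ω * mu0 ω - tauT) ^ 2 / e ^ 2
        + (eps0 ω ^ 2 * eX ω ^ 2 / (e ^ 2 * (1 - eX ω) ^ 2))
            * ((1 - Z ω) * (Y ω - mu0 ω) ^ 2) := by
    intro ω
    rcases hZ01 ω with h | h
    · by_cases hd : (1 : ℝ) - eX ω = 0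
      · simp [h, hd]
      · rw [h]; field_simp; ring
    · simp [h, div_pow]
  -- integrability of the two nonnegative parts
  have hW0 : ∀ ω, 0 ≤ Z ω * (Y ω - eps0 ω * mu0 ω - tauT) ^ 2 :=
    fun ω => mul_nonneg (hZnn ω) (sq_nonneg _)
  have hU0 : ∀ ω, 0 ≤ (1 - Z ω) * (Y ω - mu0 ω) ^ 2 :=
    fun ω => mul_nonneg (h1Znn ω) (sq_nonneg _)
  have hc0 : ∀ ω, 0 ≤ eps0 ω ^ 2 * eX ω ^ 2 / (e ^ 2 * (1 - eX ω) ^ 2) := fun ω => by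
    positivity
  have hg_int : Integrable (fun ω => Z ω * (Y ω - eps0 ω * mu0 ω - tauT) ^ 2 / e ^ 2
      + (eps0 ω ^ 2 * eX ω ^ 2 / (e ^ 2 * (1 - eX ω) ^ 2))
          * ((1 - Z ω) * (Y ω - mu0 ω) ^ 2)) P :=
    hintphi.congr (Filter.Eventually.of_forall hpt)
  have hWae : AEMeasurable (fun ω => Z ω * (Y ω - eps0 ω * mu0 ω - tauT) ^ 2) P :=
    hZmeas.aemeasurable.mul
      (((hYae.sub (heps0F.aemeasurable.mul hmu0F.aemeasurable)).sub
        aemeasurable_const).pow_const 2)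
  have hUae : AEMeasurable (fun ω => (1 - Z ω) * (Y ω - mu0 ω) ^ 2) P :=
    h1ZmF.aemeasurable.mul ((hYae.sub hmu0F.aemeasurable).pow_const 2)
  have hWdiv_int : Integrable
      (fun ω => Z ω * (Y ω - eps0 ω * mu0 ω - tauT) ^ 2 / e ^ 2) P := by
    refine hg_int.mono' (hWae.div_const (e ^ 2)).aestronglyMeasurable
      (Filter.Eventually.of_forall fun ω => ?_)
    rw [Real.norm_eq_abs, abs_of_nonneg (div_nonneg (hW0 ω) (sq_nonneg e))]
    have h2 : 0 ≤ (eps0 ω ^ 2 * eX ω ^ 2 / (e ^ 2 * (1 - eX ω) ^ 2))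
        * ((1 - Z ω) * (Y ω - mu0 ω) ^ 2) := mul_nonneg (hc0 ω) (hU0 ω)
    linarith
  have hW_int : Integrable (fun ω => Z ω * (Y ω - eps0 ω * mu0 ω - tauT) ^ 2) P := by
    have h1 := hWdiv_int.mul_const (e ^ 2)
    refine h1.congr (Filter.Eventually.of_forall fun ω => ?_)
    field_simp
  have hcU_int : Integrable (fun ω => (eps0 ω ^ 2 * eX ω ^ 2 / (e ^ 2 * (1 - eX ω) ^ 2))
      * ((1 - Z ω) * (Y ω - mu0 ω) ^ 2)) P := by
    refine hg_int.mono' (hcF.aemeasurable.mul hUae).aestronglyMeasurable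
      (Filter.Eventually.of_forall fun ω => ?_)
    rw [Real.norm_eq_abs, abs_of_nonneg (mul_nonneg (hc0 ω) (hU0 ω))]
    have h2 : 0 ≤ Z ω * (Y ω - eps0 ω * mu0 ω - tauT) ^ 2 / e ^ 2 :=
      div_nonneg (hW0 ω) (sq_nonneg e)
    linarith
  -- square integrability gives integrability
  have hZY_int : Integrable (fun ω => Z ω * Y ω) P :=
    ((memLp_two_iff_integrable_sq
      (hZmeas.aemeasurable.mul hYae).aestronglyMeasurable).mpr hsqZ).integrable one_le_two
  have h1ZY_int : Integrable (fun ω => (1 - Z ω) * Y ω) P :=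
    ((memLp_two_iff_integrable_sq
      (h1ZmF.aemeasurable.mul hYae).aestronglyMeasurable).mpr hsq1mZ).integrable one_le_two
  have hZ_int : Integrable Z P := by
    refine (integrable_const (1 : ℝ)).mono' hZmeas.aestronglyMeasurable
      (Filter.Eventually.of_forall fun ω => ?_)
    rw [Real.norm_eq_abs, abs_of_nonneg (hZnn ω)]; exact hZle1 ω
  have h1Z_int : Integrable (fun ω => 1 - Z ω) P := (integrable_const (1 : ℝ)).sub hZ_int
  -- conditional Cauchy-Schwarz, treated side
  have hcs1 := aux_cs (F := F) hmX hZY_int hsqZ hZ_int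
    (fun ω => by rcases hZ01 ω with h | h <;> simp [h]) hZZ
  have hmu1sq_int : Integrable (fun ω => mu1 ω ^ 2 * eX ω) P := by
    refine (integrable_condExp (m := mX) (μ := P)
        (f := fun ω => (Z ω * Y ω) ^ 2)).mono'
      (((hmu1F.pow_const 2).mul heXF)).aestronglyMeasurable ?_
    filter_upwards [hcs1, hmu1, heX, hov] with ω h1 h2 h3 h4
    rw [Real.norm_eq_abs, abs_of_nonneg (mul_nonneg (sq_nonneg _) h4.1.le)]
    rw [← h2, ← h3] at h1
    nlinarith [h4.1, h1]
  have hmu1sqZ_int : Integrable (fun ω => mu1 ω ^ 2 * Z ω) P := by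
    refine aux_tower (F := F) hmX (hmu1meas.pow_const 2) (fun ω => sq_nonneg _)
      hZmeas hZnn hZle1 ?_
    refine hmu1sq_int.congr ?_
    filter_upwards [heX] with ω hω
    rw [hω]
  have hmu1Z_int : Integrable (fun ω => mu1 ω * Z ω) P := by
    refine ((hmu1sqZ_int.add hZ_int).div_const 2).mono'
      ((hmu1F.mul hZmeas)).aestronglyMeasurable
      (Filter.Eventually.of_forall fun ω => ?_)
    rcases hZ01 ω with h | h
    · simp [h]
    · simp only [h, mul_one, Real.norm_eq_abs, Pi.add_apply]
      nlinarith [sq_nonneg (|mu1 ω| - 1), sq_abs (mu1 ω), abs_nonneg (mu1 ω)]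
  have hV_int : Integrable (fun ω => Z ω * (Y ω - mu1 ω) ^ 2) P := by
    refine ((hsqZ.const_mul 2).add (hmu1sqZ_int.const_mul 2)).mono'
      (hZmeas.aemeasurable.mul
        ((hYae.sub hmu1F.aemeasurable).pow_const 2)).aestronglyMeasurable
      (Filter.Eventually.of_forall fun ω => ?_)
    rcases hZ01 ω with h | h
    · simp [h]
    · simp only [h, one_mul, mul_one, Real.norm_eq_abs, Pi.add_apply]
      rw [abs_of_nonneg (sq_nonneg _)]
      nlinarith [sq_nonneg (Y ω + mu1 ω)]
  have haZ_int : Integrable (fun ω => (mu1 ω - eps0 ω * mu0 ω - tauT) ^ 2 * Z ω) P := by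
    refine ((hW_int.const_mul 2).add (hV_int.const_mul 2)).mono'
      ((hamF.pow_const 2).mul hZmeas).aestronglyMeasurable
      (Filter.Eventually.of_forall fun ω => ?_)
    rcases hZ01 ω with h | h
    · simp [h]
    · simp only [h, one_mul, mul_one, Real.norm_eq_abs, Pi.add_apply]
      rw [abs_of_nonneg (sq_nonneg _)]
      nlinarith [sq_nonneg ((Y ω - eps0 ω * mu0 ω - tauT) + (Y ω - mu1 ω))]
  have hZYm1_int : Integrable (fun ω => Z ω * Y ω - mu1 ω * Z ω) P :=
    hZY_int.sub hmu1Z_int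
  have hcr_int : Integrable (fun ω => (2 * (mu1 ω - eps0 ω * mu0 ω - tauT))
      * (Z ω * Y ω - mu1 ω * Z ω)) P := by
    refine ((hW_int.sub hV_int).sub haZ_int).congr
      (Filter.Eventually.of_forall fun ω => ?_)
    simp only [Pi.sub_apply]
    rcases hZ01 ω with h | h
    · simp [h]
    · rw [h]; ring
  -- conditional Cauchy-Schwarz, control side
  have hcs0 := aux_cs (F := F) hmX h1ZY_int hsq1mZ h1Z_int
    (fun ω => by rcases hZ01 ω with h | h <;> simp [h])
    (fun ω => by rcases hZ01 ω with h | h <;> simp [h])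
  have h1mZcond : P[fun ω => 1 - Z ω|mX] =ᵐ[P] fun ω => 1 - eX ω := by
    have h0 : (fun ω => 1 - Z ω) = ((fun _ : Ω => (1 : ℝ)) - Z) := rfl
    rw [h0]
    refine (condExp_sub (integrable_const (1 : ℝ)) hZ_int mX).trans ?_
    rw [condExp_const hmX (1 : ℝ)]
    filter_upwards [heX] with ω hω
    simp only [Pi.sub_apply]
    rw [← hω]
  have hmu0sq_int : Integrable (fun ω => mu0 ω ^ 2 * (1 - eX ω)) P := by
    refine (integrable_condExp (m := mX) (μ := P)
        (f := fun ω => ((1 - Z ω) * Y ω) ^ 2)).mono'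
      (((hmu0F.pow_const 2).mul (measurable_const.sub heXF))).aestronglyMeasurable ?_
    filter_upwards [hcs0, hmu0, h1mZcond, hov] with ω h1 h2 h3 h4
    have h4' : 0 < 1 - eX ω := by linarith [h4.2]
    rw [Real.norm_eq_abs, abs_of_nonneg (mul_nonneg (sq_nonneg _) h4'.le)]
    rw [← h2, h3] at h1
    nlinarith [h4', h1]
  have hmu0sq1Z_int : Integrable (fun ω => mu0 ω ^ 2 * (1 - Z ω)) P := by
    refine aux_tower (F := F) hmX (hmu0meas.pow_const 2) (fun ω => sq_nonneg _)
      h1ZmF h1Znn h1Zle1 ?_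
    refine hmu0sq_int.congr ?_
    filter_upwards [h1mZcond] with ω hω
    rw [← hω]
  have hU_int : Integrable (fun ω => (1 - Z ω) * (Y ω - mu0 ω) ^ 2) P := by
    refine ((hsq1mZ.const_mul 2).add (hmu0sq1Z_int.const_mul 2)).mono'
      hUae.aestronglyMeasurable (Filter.Eventually.of_forall fun ω => ?_)
    rcases hZ01 ω with h | h
    · simp only [h, sub_zero, one_mul, mul_one, Real.norm_eq_abs, Pi.add_apply]
      rw [abs_of_nonneg (sq_nonneg _)]
      nlinarith [sq_nonneg (Y ω + mu0 ω)]
    · simp [h]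
  -- conditional expectation computations
  have hmu1Zcond : P[fun ω => mu1 ω * Z ω|mX] =ᵐ[P] fun ω => mu1 ω * eX ω := by
    have h0 : (fun ω => mu1 ω * Z ω) = mu1 * Z := rfl
    rw [h0]
    refine (condExp_mul_of_stronglyMeasurable_left hmu1meas.stronglyMeasurable
      (show Integrable (mu1 * Z) P from hmu1Z_int) hZ_int).trans ?_
    filter_upwards [heX] with ω hω
    simp only [Pi.mul_apply]
    rw [← hω]
  have hZYm1cond : P[fun ω => Z ω * Y ω - mu1 ω * Z ω|mX] =ᵐ[P] fun _ => (0 : ℝ) := by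
    have h0 : (fun ω => Z ω * Y ω - mu1 ω * Z ω)
        = ((fun ω => Z ω * Y ω) - fun ω => mu1 ω * Z ω) := rfl
    rw [h0]
    refine (condExp_sub hZY_int hmu1Z_int mX).trans ?_
    filter_upwards [hmu1, hmu1Zcond] with ω h1 h2
    simp only [Pi.sub_apply]
    rw [← h1, h2]
    ring
  have hcrosscond : P[fun ω => (2 * (mu1 ω - eps0 ω * mu0 ω - tauT))
      * (Z ω * Y ω - mu1 ω * Z ω)|mX] =ᵐ[P] fun _ => (0 : ℝ) := by
    have h0 : (fun ω => (2 * (mu1 ω - eps0 ω * mu0 ω - tauT))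
          * (Z ω * Y ω - mu1 ω * Z ω))
        = ((fun ω => 2 * (mu1 ω - eps0 ω * mu0 ω - tauT))
          * fun ω => Z ω * Y ω - mu1 ω * Z ω) := rfl
    rw [h0]
    refine (condExp_mul_of_stronglyMeasurable_left
      ((ham.const_mul 2).stronglyMeasurable)
      (show Integrable ((fun ω => 2 * (mu1 ω - eps0 ω * mu0 ω - tauT))
        * fun ω => Z ω * Y ω - mu1 ω * Z ω) P from hcr_int) hZYm1_int).trans ?_
    filter_upwards [hZYm1cond] with ω h1
    simp only [Pi.mul_apply]
    rw [h1]
    ring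
  have haZcond : P[fun ω => (mu1 ω - eps0 ω * mu0 ω - tauT) ^ 2 * Z ω|mX]
      =ᵐ[P] fun ω => (mu1 ω - eps0 ω * mu0 ω - tauT) ^ 2 * eX ω := by
    have h0 : (fun ω => (mu1 ω - eps0 ω * mu0 ω - tauT) ^ 2 * Z ω)
        = ((fun ω => (mu1 ω - eps0 ω * mu0 ω - tauT) ^ 2) * Z) := rfl
    rw [h0]
    refine (condExp_mul_of_stronglyMeasurable_left ha2m.stronglyMeasurable
      (show Integrable ((fun ω => (mu1 ω - eps0 ω * mu0 ω - tauT) ^ 2) * Z) P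
        from haZ_int) hZ_int).trans ?_
    filter_upwards [heX] with ω hω
    simp only [Pi.mul_apply]
    rw [← hω]
  have hWcond : P[fun ω => Z ω * (Y ω - eps0 ω * mu0 ω - tauT) ^ 2|mX]
      =ᵐ[P] fun ω => v1 ω * eX ω
        + (mu1 ω - eps0 ω * mu0 ω - tauT) ^ 2 * eX ω := by
    have hdec : (fun ω => Z ω * (Y ω - eps0 ω * mu0 ω - tauT) ^ 2)
        =ᵐ[P] fun ω => (Z ω * (Y ω - mu1 ω) ^ 2
            + (2 * (mu1 ω - eps0 ω * mu0 ω - tauT)) * (Z ω * Y ω - mu1 ω * Z ω))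
          + (mu1 ω - eps0 ω * mu0 ω - tauT) ^ 2 * Z ω := by
      refine Filter.Eventually.of_forall fun ω => ?_
      rcases hZ01 ω with h | h
      · simp [h]
      · simp only [h]; ring
    refine (condExp_congr_ae hdec).trans ?_
    have h0 : (fun ω => (Z ω * (Y ω - mu1 ω) ^ 2
            + (2 * (mu1 ω - eps0 ω * mu0 ω - tauT)) * (Z ω * Y ω - mu1 ω * Z ω))
          + (mu1 ω - eps0 ω * mu0 ω - tauT) ^ 2 * Z ω)
        = (((fun ω => Z ω * (Y ω - mu1 ω) ^ 2)
            + fun ω => (2 * (mu1 ω - eps0 ω * mu0 ω - tauT))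
              * (Z ω * Y ω - mu1 ω * Z ω))
          + fun ω => (mu1 ω - eps0 ω * mu0 ω - tauT) ^ 2 * Z ω) := rfl
    rw [h0]
    refine (condExp_add (hV_int.add hcr_int) haZ_int mX).trans ?_
    have h1 := condExp_add (μ := P) (m := mX) hV_int hcr_int
    filter_upwards [h1, hv1.symm, hcrosscond, haZcond] with ω e1 e2 e3 e4
    simp only [Pi.add_apply] at e1 ⊢
    rw [e1, e2, e3, e4]
    ring
  have hcUcond : P[fun ω => (eps0 ω ^ 2 * eX ω ^ 2 / (e ^ 2 * (1 - eX ω) ^ 2))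
      * ((1 - Z ω) * (Y ω - mu0 ω) ^ 2)|mX]
      =ᵐ[P] fun ω => (eps0 ω ^ 2 * eX ω ^ 2 / (e ^ 2 * (1 - eX ω) ^ 2))
        * (v0 ω * (1 - eX ω)) := by
    have h0 : (fun ω => (eps0 ω ^ 2 * eX ω ^ 2 / (e ^ 2 * (1 - eX ω) ^ 2))
          * ((1 - Z ω) * (Y ω - mu0 ω) ^ 2))
        = ((fun ω => eps0 ω ^ 2 * eX ω ^ 2 / (e ^ 2 * (1 - eX ω) ^ 2))
          * fun ω => (1 - Z ω) * (Y ω - mu0 ω) ^ 2) := rfl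
    rw [h0]
    refine (condExp_mul_of_stronglyMeasurable_left hcm.stronglyMeasurable
      (show Integrable ((fun ω => eps0 ω ^ 2 * eX ω ^ 2 / (e ^ 2 * (1 - eX ω) ^ 2))
        * fun ω => (1 - Z ω) * (Y ω - mu0 ω) ^ 2) P from hcU_int) hU_int).trans ?_
    filter_upwards [hv0.symm] with ω hω
    simp only [Pi.mul_apply]
    rw [hω]
  -- conditional expectation of the full expansion
  have hgcond : P[fun ω => Z ω * (Y ω - eps0 ω * mu0 ω - tauT) ^ 2 / e ^ 2
      + (eps0 ω ^ 2 * eX ω ^ 2 / (e ^ 2 * (1 - eX ω) ^ 2))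
          * ((1 - Z ω) * (Y ω - mu0 ω) ^ 2)|mX]
      =ᵐ[P] fun ω => (eX ω * v1 ω / e ^ 2
          + eX ω ^ 2 * eps0 ω ^ 2 * v0 ω / (e ^ 2 * (1 - eX ω)))
        + eX ω * (mu1 ω - eps0 ω * mu0 ω - tauT) ^ 2 / e ^ 2 := by
    have h0 : (fun ω => Z ω * (Y ω - eps0 ω * mu0 ω - tauT) ^ 2 / e ^ 2
          + (eps0 ω ^ 2 * eX ω ^ 2 / (e ^ 2 * (1 - eX ω) ^ 2))
              * ((1 - Z ω) * (Y ω - mu0 ω) ^ 2))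
        = ((fun ω => Z ω * (Y ω - eps0 ω * mu0 ω - tauT) ^ 2 / e ^ 2)
          + fun ω => (eps0 ω ^ 2 * eX ω ^ 2 / (e ^ 2 * (1 - eX ω) ^ 2))
              * ((1 - Z ω) * (Y ω - mu0 ω) ^ 2)) := rfl
    rw [h0]
    refine (condExp_add hWdiv_int hcU_int mX).trans ?_
    have hsm : (fun ω => Z ω * (Y ω - eps0 ω * mu0 ω - tauT) ^ 2 / e ^ 2)
        = (e ^ 2)⁻¹ • fun ω => Z ω * (Y ω - eps0 ω * mu0 ω - tauT) ^ 2 := by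
      funext ω
      simp only [Pi.smul_apply, smul_eq_mul]
      ring
    have hWdivcond : P[fun ω => Z ω * (Y ω - eps0 ω * mu0 ω - tauT) ^ 2 / e ^ 2|mX]
        =ᵐ[P] fun ω => (v1 ω * eX ω
          + (mu1 ω - eps0 ω * mu0 ω - tauT) ^ 2 * eX ω) / e ^ 2 := by
      rw [hsm]
      refine (condExp_smul (μ := P) (m := mX) ((e : ℝ) ^ 2)⁻¹
        (fun ω => Z ω * (Y ω - eps0 ω * mu0 ω - tauT) ^ 2)).trans ?_
      filter_upwards [hWcond] with ω hω
      simp only [Pi.smul_apply, smul_eq_mul]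
      rw [hω]
      ring
    filter_upwards [hWdivcond, hcUcond, hov] with ω h1 h2 h3
    simp only [Pi.add_apply]
    rw [h1, h2]
    have hd : (1 : ℝ) - eX ω ≠ 0 := by linarith [h3.2]
    field_simp
    ring
  -- final computation
  calc ∫ ω, (Z ω * (Y ω - eps0 ω * mu0 ω - tauT) / e
        + eps0 ω * eX ω * ((1 - Z ω) * (Y ω - mu0 ω)) / (e * (1 - eX ω))) ^ 2 ∂P
      = ∫ ω, (Z ω * (Y ω - eps0 ω * mu0 ω - tauT) ^ 2 / e ^ 2
          + (eps0 ω ^ 2 * eX ω ^ 2 / (e ^ 2 * (1 - eX ω) ^ 2))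
              * ((1 - Z ω) * (Y ω - mu0 ω) ^ 2)) ∂P :=
        integral_congr_ae (Filter.Eventually.of_forall hpt)
    _ = ∫ ω, (P[fun ω' => Z ω' * (Y ω' - eps0 ω' * mu0 ω' - tauT) ^ 2 / e ^ 2
          + (eps0 ω' ^ 2 * eX ω' ^ 2 / (e ^ 2 * (1 - eX ω') ^ 2))
              * ((1 - Z ω') * (Y ω' - mu0 ω') ^ 2)|mX]) ω ∂P :=
        (integral_condExp hmX).symm
    _ = ∫ ω, ((eX ω * v1 ω / e ^ 2
          + eX ω ^ 2 * eps0 ω ^ 2 * v0 ω / (e ^ 2 * (1 - eX ω)))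
        + eX ω * (mu1 ω - eps0 ω * mu0 ω - tauT) ^ 2 / e ^ 2) ∂P :=
        integral_congr_ae hgcond
    _ = ∫ ω, (eX ω * v1 ω / e ^ 2
            + eX ω ^ 2 * eps0 ω ^ 2 * v0 ω / (e ^ 2 * (1 - eX ω))) ∂P
        + ∫ ω, eX ω * (mu1 ω - eps0 ω * mu0 ω - tauT) ^ 2 / e ^ 2 ∂P :=
        integral_add hintv hintm
end

section
/- (Identification with a multi-valued treatment, Section S1.3.) For each treatment level k ∈ {1,…,K}, the mean potential outcome is identified by three equal formulas: E[Y(k)] = Σ_{l=1}^{K} E[ 1(Z=l)·μ_k(X)/ε_{k,l}(X) ] = Σ_{l=1}^{K} E[ (e_l(X)/ε_{k,l}(X))·1(Z=k)·Y/e_k(X) ] = Σ_{l=1}^{K} E[ 1(Z=l)·μ_k(X)/ε_{k,l}(X) + (e_l(X)/ε_{k,l}(X))·1(Z=k)·(Y−μ_k(X))/e_k(X) ]. -/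
open MeasureTheory

/-- Identification with a multi-valued treatment (Section S1.3). -/
theorem multivalued_treatment_identification
    {Ω : Type*} [F : MeasurableSpace Ω] (P : Measure Ω) [IsProbabilityMeasure P]
    (K : ℕ) (Z : Ω → ℕ) (hZmeas : Measurable Z)
    (hZrange : ∀ ω, Z ω ∈ Finset.Icc 1 K)
    (Yk : ℕ → Ω → ℝ) (Y : Ω → ℝ)
    (hYkint : ∀ k ∈ Finset.Icc 1 K, Integrable (Yk k) P)
    (hYdef : ∀ ω, Y ω = Yk (Z ω) ω)
    (mX : MeasurableSpace Ω) (hmX : mX ≤ F)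
    (eK : ℕ → Ω → ℝ) (heKmeas : ∀ k ∈ Finset.Icc 1 K, Measurable[mX] (eK k))
    (heK : ∀ k ∈ Finset.Icc 1 K,
      eK k =ᵐ[P] P[fun ω => if Z ω = k then (1 : ℝ) else 0|mX])
    (heKpos : ∀ k ∈ Finset.Icc 1 K, ∀ᵐ ω ∂P, 0 < eK k ω)
    (muK : ℕ → Ω → ℝ) (hmuKmeas : ∀ k ∈ Finset.Icc 1 K, Measurable[mX] (muK k))
    (hmuK : ∀ k ∈ Finset.Icc 1 K, (fun ω => muK k ω * eK k ω)
        =ᵐ[P] P[fun ω => (if Z ω = k then (1 : ℝ) else 0) * Y ω|mX])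
    (eps : ℕ → ℕ → Ω → ℝ)
    (hepsmeas : ∀ k ∈ Finset.Icc 1 K, ∀ l ∈ Finset.Icc 1 K, Measurable[mX] (eps k l))
    (hepspos : ∀ k ∈ Finset.Icc 1 K, ∀ l ∈ Finset.Icc 1 K, ∀ᵐ ω ∂P, 0 < eps k l ω)
    (hepskk : ∀ k ∈ Finset.Icc 1 K, ∀ᵐ ω ∂P, eps k k ω = 1)
    (hsens : ∀ k ∈ Finset.Icc 1 K, ∀ l ∈ Finset.Icc 1 K, ∀ᵐ ω ∂P,
      eK l ω * (P[fun ω' => (if Z ω' = k then (1 : ℝ) else 0) * Yk k ω'|mX]) ω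
        = eps k l ω * eK k ω
          * (P[fun ω' => (if Z ω' = l then (1 : ℝ) else 0) * Yk k ω'|mX]) ω)
    (hint1 : ∀ k ∈ Finset.Icc 1 K, ∀ l ∈ Finset.Icc 1 K,
      Integrable (fun ω => (if Z ω = l then (1 : ℝ) else 0) * muK k ω / eps k l ω) P)
    (hint2 : ∀ k ∈ Finset.Icc 1 K, ∀ l ∈ Finset.Icc 1 K,
      Integrable (fun ω =>
        eK l ω / eps k l ω * ((if Z ω = k then (1 : ℝ) else 0) * Y ω) / eK k ω) P)
    (hint3 : ∀ k ∈ Finset.Icc 1 K, ∀ l ∈ Finset.Icc 1 K,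
      Integrable (fun ω => (if Z ω = l then (1 : ℝ) else 0) * muK k ω / eps k l ω
        + eK l ω / eps k l ω
          * ((if Z ω = k then (1 : ℝ) else 0) * (Y ω - muK k ω)) / eK k ω) P) :
    ∀ k ∈ Finset.Icc 1 K,
      (∫ ω, Yk k ω ∂P = ∑ l ∈ Finset.Icc 1 K,
        ∫ ω, (if Z ω = l then (1 : ℝ) else 0) * muK k ω / eps k l ω ∂P)
      ∧ (∫ ω, Yk k ω ∂P = ∑ l ∈ Finset.Icc 1 K,
        ∫ ω, eK l ω / eps k l ω * ((if Z ω = k then (1 : ℝ) else 0) * Y ω) / eK k ω ∂P)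
      ∧ (∫ ω, Yk k ω ∂P = ∑ l ∈ Finset.Icc 1 K,
        ∫ ω, ((if Z ω = l then (1 : ℝ) else 0) * muK k ω / eps k l ω
          + eK l ω / eps k l ω
            * ((if Z ω = k then (1 : ℝ) else 0) * (Y ω - muK k ω)) / eK k ω) ∂P) := by
  intro k hk
  -- indicators are measurable and integrable
  have hImeas : ∀ j : ℕ, Measurable[F] (fun ω => if Z ω = j then (1 : ℝ) else 0) := by
    intro j
    exact Measurable.ite (hZmeas (measurableSet_singleton j)) measurable_const
      measurable_const
  have hIint : ∀ j : ℕ, Integrable (fun ω => if Z ω = j then (1 : ℝ) else 0) P := by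
    intro j
    refine (integrable_const (1 : ℝ)).mono' (hImeas j).aestronglyMeasurable ?_
    refine ae_of_all _ fun ω => ?_
    by_cases h : Z ω = j <;> simp [h]
  have hIYint : ∀ j : ℕ, Integrable (fun ω => (if Z ω = j then (1 : ℝ) else 0) * Yk k ω) P := by
    intro j
    refine (hYkint k hk).norm.mono'
      ((hImeas j).aestronglyMeasurable.mul (hYkint k hk).1) ?_
    refine ae_of_all _ fun ω => ?_
    by_cases h : Z ω = j <;> simp [h]
  have hIkYeq : (fun ω => (if Z ω = k then (1 : ℝ) else 0) * Y ω)
      = fun ω => (if Z ω = k then (1 : ℝ) else 0) * Yk k ω := by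
    funext ω
    by_cases h : Z ω = k
    · simp [h, hYdef ω]
    · simp [h]
  -- the key conditional-expectation identity
  have hCl : ∀ l ∈ Finset.Icc 1 K,
      P[fun ω => (if Z ω = l then (1 : ℝ) else 0) * Yk k ω|mX]
        =ᵐ[P] fun ω => eK l ω * muK k ω / eps k l ω := by
    intro l hl
    have hmu' : (fun ω => muK k ω * eK k ω)
        =ᵐ[P] P[fun ω => (if Z ω = k then (1 : ℝ) else 0) * Yk k ω|mX] := by
      rw [← hIkYeq]; exact hmuK k hk
    filter_upwards [hsens k hk l hl, hmu', heKpos k hk, hepspos k hk l hl]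
      with ω hs hmu hek heps
    rw [← hmu] at hs
    rw [eq_div_iff heps.ne']
    have h3 : ((P[fun ω' => (if Z ω' = l then (1 : ℝ) else 0) * Yk k ω'|mX]) ω
        * eps k l ω) * eK k ω = (eK l ω * muK k ω) * eK k ω := by
      linear_combination -hs
    exact mul_right_cancel₀ hek.ne' h3
  have eq0 : ∀ l ∈ Finset.Icc 1 K,
      ∫ ω, (if Z ω = l then (1 : ℝ) else 0) * Yk k ω ∂P
        = ∫ ω, eK l ω * muK k ω / eps k l ω ∂P := by
    intro l hl
    calc ∫ ω, (if Z ω = l then (1 : ℝ) else 0) * Yk k ω ∂P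
        = ∫ ω, (P[fun ω' => (if Z ω' = l then (1 : ℝ) else 0) * Yk k ω'|mX]) ω ∂P :=
          (integral_condExp hmX).symm
      _ = ∫ ω, eK l ω * muK k ω / eps k l ω ∂P := integral_congr_ae (hCl l hl)
  -- formula A
  have eqA : ∀ l ∈ Finset.Icc 1 K,
      ∫ ω, (if Z ω = l then (1 : ℝ) else 0) * muK k ω / eps k l ω ∂P
        = ∫ ω, (if Z ω = l then (1 : ℝ) else 0) * Yk k ω ∂P := by
    intro l hl
    have hfmeas : StronglyMeasurable[mX] (fun ω => muK k ω / eps k l ω) :=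
      ((hmuKmeas k hk).div (hepsmeas k hk l hl)).stronglyMeasurable
    have hAeq : (fun ω => (if Z ω = l then (1 : ℝ) else 0) * muK k ω / eps k l ω)
        = (fun ω => muK k ω / eps k l ω) * (fun ω => if Z ω = l then (1 : ℝ) else 0) := by
      funext ω; simp only [Pi.mul_apply]; ring
    have hpull := condExp_mul_of_stronglyMeasurable_left hfmeas
      (by rw [← hAeq]; exact hint1 k hk l hl) (hIint l)
    have h1 : P[fun ω => (if Z ω = l then (1 : ℝ) else 0) * muK k ω / eps k l ω|mX]
        =ᵐ[P] fun ω => eK l ω * muK k ω / eps k l ω := by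
      rw [hAeq]
      refine hpull.trans ?_
      filter_upwards [heK l hl] with ω h
      simp only [Pi.mul_apply]
      rw [← h]; ring
    calc ∫ ω, (if Z ω = l then (1 : ℝ) else 0) * muK k ω / eps k l ω ∂P
        = ∫ ω, (P[fun ω' => (if Z ω' = l then (1 : ℝ) else 0) * muK k ω' / eps k l ω'|mX]) ω ∂P :=
          (integral_condExp hmX).symm
      _ = ∫ ω, eK l ω * muK k ω / eps k l ω ∂P := integral_congr_ae h1
      _ = ∫ ω, (if Z ω = l then (1 : ℝ) else 0) * Yk k ω ∂P := (eq0 l hl).symm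
  -- formula B
  have eqB : ∀ l ∈ Finset.Icc 1 K,
      ∫ ω, eK l ω / eps k l ω * ((if Z ω = k then (1 : ℝ) else 0) * Y ω) / eK k ω ∂P
        = ∫ ω, (if Z ω = l then (1 : ℝ) else 0) * Yk k ω ∂P := by
    intro l hl
    have hhmeas : StronglyMeasurable[mX] (fun ω => eK l ω / eps k l ω / eK k ω) :=
      (((heKmeas l hl).div (hepsmeas k hk l hl)).div (heKmeas k hk)).stronglyMeasurable
    have hgint : Integrable (fun ω => (if Z ω = k then (1 : ℝ) else 0) * Y ω) P := by
      rw [hIkYeq]; exact hIYint k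
    have hBeq : (fun ω => eK l ω / eps k l ω * ((if Z ω = k then (1 : ℝ) else 0) * Y ω) / eK k ω)
        = (fun ω => eK l ω / eps k l ω / eK k ω)
          * (fun ω => (if Z ω = k then (1 : ℝ) else 0) * Y ω) := by
      funext ω; simp only [Pi.mul_apply]; ring
    have hpull := condExp_mul_of_stronglyMeasurable_left hhmeas
      (by rw [← hBeq]; exact hint2 k hk l hl) hgint
    have h1 : P[fun ω => eK l ω / eps k l ω * ((if Z ω = k then (1 : ℝ) else 0) * Y ω) / eK k ω|mX]
        =ᵐ[P] fun ω => eK l ω * muK k ω / eps k l ω := by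
      rw [hBeq]
      refine hpull.trans ?_
      filter_upwards [hmuK k hk, heKpos k hk, hepspos k hk l hl] with ω hm hek heps
      simp only [Pi.mul_apply]
      rw [← hm]
      field_simp
    calc ∫ ω, eK l ω / eps k l ω * ((if Z ω = k then (1 : ℝ) else 0) * Y ω) / eK k ω ∂P
        = ∫ ω, (P[fun ω' => eK l ω' / eps k l ω'
            * ((if Z ω' = k then (1 : ℝ) else 0) * Y ω') / eK k ω'|mX]) ω ∂P :=
          (integral_condExp hmX).symm
      _ = ∫ ω, eK l ω * muK k ω / eps k l ω ∂P := integral_congr_ae h1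
      _ = ∫ ω, (if Z ω = l then (1 : ℝ) else 0) * Yk k ω ∂P := (eq0 l hl).symm
  -- formula C
  have eqC : ∀ l ∈ Finset.Icc 1 K,
      ∫ ω, ((if Z ω = l then (1 : ℝ) else 0) * muK k ω / eps k l ω
          + eK l ω / eps k l ω
            * ((if Z ω = k then (1 : ℝ) else 0) * (Y ω - muK k ω)) / eK k ω) ∂P
        = ∫ ω, (if Z ω = l then (1 : ℝ) else 0) * Yk k ω ∂P := by
    intro l hl
    have hB'int : Integrable (fun ω => eK l ω / eps k l ω
        * ((if Z ω = k then (1 : ℝ) else 0) * (Y ω - muK k ω)) / eK k ω) P := by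
      have h := (hint3 k hk l hl).sub (hint1 k hk l hl)
      refine h.congr (ae_of_all _ fun ω => by simp only [Pi.sub_apply]; ring)
    have hhmeas : StronglyMeasurable[mX] (fun ω => eK l ω / eps k l ω / eK k ω) :=
      (((heKmeas l hl).div (hepsmeas k hk l hl)).div (heKmeas k hk)).stronglyMeasurable
    have h1int : Integrable (fun ω => (if Z ω = k then (1 : ℝ) else 0) * Y ω) P := by
      rw [hIkYeq]; exact hIYint k
    have h2int : Integrable (fun ω => muK k ω * (if Z ω = k then (1 : ℝ) else 0)) P := by
      refine (hint1 k hk k hk).congr ?_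
      filter_upwards [hepskk k hk] with ω h
      rw [h]; ring
    have hg'int : Integrable (fun ω => (if Z ω = k then (1 : ℝ) else 0) * (Y ω - muK k ω)) P := by
      refine (h1int.sub h2int).congr (ae_of_all _ fun ω => by simp only [Pi.sub_apply]; ring)
    have hcond0 : P[fun ω => (if Z ω = k then (1 : ℝ) else 0) * (Y ω - muK k ω)|mX]
        =ᵐ[P] fun _ => (0 : ℝ) := by
      have hsplit : (fun ω => (if Z ω = k then (1 : ℝ) else 0) * (Y ω - muK k ω))
          = (fun ω => (if Z ω = k then (1 : ℝ) else 0) * Y ω)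
            - (fun ω => muK k ω * (if Z ω = k then (1 : ℝ) else 0)) := by
        funext ω; simp only [Pi.sub_apply]; ring
      have hmul : (fun ω => muK k ω * (if Z ω = k then (1 : ℝ) else 0))
          = (muK k) * (fun ω => if Z ω = k then (1 : ℝ) else 0) := by
        funext ω; simp [Pi.mul_apply]
      have hpull2 := condExp_mul_of_stronglyMeasurable_left
        ((hmuKmeas k hk).stronglyMeasurable)
        (by rw [← hmul]; exact h2int) (hIint k)
      rw [hsplit]
      refine (condExp_sub h1int h2int _).trans ?_
      have hpull2' : P[fun ω => muK k ω * (if Z ω = k then (1 : ℝ) else 0)|mX]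
          =ᵐ[P] muK k * P[fun ω => if Z ω = k then (1 : ℝ) else 0|mX] := by
        rw [hmul]; exact hpull2
      filter_upwards [hmuK k hk, hpull2', heK k hk] with ω hm hp he
      simp only [Pi.sub_apply, Pi.mul_apply] at *
      rw [← hm, hp, ← he]; ring
    have hB'eq : (fun ω => eK l ω / eps k l ω
          * ((if Z ω = k then (1 : ℝ) else 0) * (Y ω - muK k ω)) / eK k ω)
        = (fun ω => eK l ω / eps k l ω / eK k ω)
          * (fun ω => (if Z ω = k then (1 : ℝ) else 0) * (Y ω - muK k ω)) := by
      funext ω; simp only [Pi.mul_apply]; ring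
    have hpull := condExp_mul_of_stronglyMeasurable_left hhmeas
      (by rw [← hB'eq]; exact hB'int) hg'int
    have hB'zero : ∫ ω, eK l ω / eps k l ω
        * ((if Z ω = k then (1 : ℝ) else 0) * (Y ω - muK k ω)) / eK k ω ∂P = 0 := by
      have hz : P[fun ω => eK l ω / eps k l ω
          * ((if Z ω = k then (1 : ℝ) else 0) * (Y ω - muK k ω)) / eK k ω|mX]
          =ᵐ[P] fun _ => (0 : ℝ) := by
        rw [hB'eq]
        refine hpull.trans ?_
        filter_upwards [hcond0] with ω h0
        simp only [Pi.mul_apply]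
        rw [h0]; ring
      calc ∫ ω, eK l ω / eps k l ω
            * ((if Z ω = k then (1 : ℝ) else 0) * (Y ω - muK k ω)) / eK k ω ∂P
          = ∫ ω, (P[fun ω' => eK l ω' / eps k l ω'
              * ((if Z ω' = k then (1 : ℝ) else 0) * (Y ω' - muK k ω')) / eK k ω'|mX]) ω ∂P :=
            (integral_condExp hmX).symm
        _ = ∫ _ω, (0 : ℝ) ∂P := integral_congr_ae hz
        _ = 0 := integral_zero _ _
    rw [integral_add (hint1 k hk l hl) hB'int, hB'zero, add_zero]
    exact eqA l hl
  -- total expectation as a sum over indicators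
  have hsum : ∫ ω, Yk k ω ∂P
      = ∑ l ∈ Finset.Icc 1 K, ∫ ω, (if Z ω = l then (1 : ℝ) else 0) * Yk k ω ∂P := by
    rw [← integral_finset_sum _ (fun l _ => hIYint l)]
    refine integral_congr_ae (ae_of_all _ fun ω => ?_)
    have h1 : ∑ l ∈ Finset.Icc 1 K, (if Z ω = l then (1 : ℝ) else 0) = 1 := by
      simp [Finset.sum_ite_eq, hZrange ω]
    show Yk k ω = ∑ l ∈ Finset.Icc 1 K, (if Z ω = l then (1 : ℝ) else 0) * Yk k ω
    rw [← Finset.sum_mul, h1, one_mul]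
  refine ⟨?_, ?_, ?_⟩
  · rw [hsum]
    exact Finset.sum_congr rfl fun l hl => (eqA l hl).symm
  · rw [hsum]
    exact Finset.sum_congr rfl fun l hl => (eqB l hl).symm
  · rw [hsum]
    exact Finset.sum_congr rfl fun l hl => (eqC l hl).symm
end

section
/- (Identification under sensitivity parameters on the difference scale, Section 6.1.) Under the difference-scale sensitivity parametrization, the mean potential outcomes satisfy the three equal identification formulas: E[Y(1)] = E[μ1(X)] − E[(1−Z)·δ1(X)] = E[Z·Y/e(X) − (1−Z)·δ1(X)] = E[μ1(X) + Z·(Y−μ1(X))/e(X) − (1−Z)·δ1(X)], and E[Y(0)] = E[μ0(X)] + E[Z·δ0(X)] = E[(1−Z)·Y/(1−e(X)) + Z·δ0(X)] = E[μ0(X) + (1−Z)·(Y−μ0(X))/(1−e(X)) + Z·δ0(X)]. -/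
open MeasureTheory

lemma key_identification
    {Ω : Type*} [F : MeasurableSpace Ω] (P : Measure Ω) [IsProbabilityMeasure P]
    (Z Y1 Y : Ω → ℝ)
    (hZmeas : Measurable Z) (hZ01 : ∀ ω, Z ω = 0 ∨ Z ω = 1)
    (hY1int : Integrable Y1 P)
    (hZY : ∀ ω, Z ω * Y ω = Z ω * Y1 ω)
    (mX : MeasurableSpace Ω) (hmX : mX ≤ F)
    (eX : Ω → ℝ) (heXmeas : Measurable[mX] eX) (heX : eX =ᵐ[P] P[Z|mX])
    (hov : ∀ᵐ ω ∂P, 0 < eX ω ∧ eX ω < 1)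
    (mu : Ω → ℝ) (hmumeas : Measurable[mX] mu)
    (hmu : (fun ω => mu ω * eX ω) =ᵐ[P] P[fun ω => Z ω * Y ω|mX])
    (del : Ω → ℝ) (hdelmeas : Measurable[mX] del) (hdelint : Integrable del P)
    (hdel : ∀ᵐ ω ∂P, (1 - eX ω) * (P[fun ω' => Z ω' * Y1 ω'|mX]) ω
        - eX ω * (P[fun ω' => (1 - Z ω') * Y1 ω'|mX]) ω
        = del ω * eX ω * (1 - eX ω))
    (hinta : Integrable mu P)
    (hintb : Integrable (fun ω => (1 - Z ω) * del ω) P)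
    (hintc : Integrable (fun ω => Z ω * Y ω / eX ω - (1 - Z ω) * del ω) P)
    (hintd : Integrable (fun ω => mu ω + Z ω * (Y ω - mu ω) / eX ω
        - (1 - Z ω) * del ω) P) :
    (∫ ω, Y1 ω ∂P = ∫ ω, mu ω ∂P - ∫ ω, (1 - Z ω) * del ω ∂P)
    ∧ (∫ ω, Y1 ω ∂P = ∫ ω, (Z ω * Y ω / eX ω - (1 - Z ω) * del ω) ∂P)
    ∧ (∫ ω, Y1 ω ∂P
        = ∫ ω, (mu ω + Z ω * (Y ω - mu ω) / eX ω - (1 - Z ω) * del ω) ∂P) := by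
  -- boundedness of Z
  have hZbd : ∀ ω, ‖Z ω‖ ≤ 1 := by
    intro ω; rcases hZ01 ω with h | h <;> simp [h]
  have h1Zbd : ∀ ω, ‖1 - Z ω‖ ≤ 1 := by
    intro ω; rcases hZ01 ω with h | h <;> simp [h]
  have hZint : Integrable Z P := by
    have := (integrable_const (μ := P) (1 : ℝ)).bdd_mul hZmeas.aestronglyMeasurable (Filter.Eventually.of_forall hZbd)
    simpa using this
  have h1Zint : Integrable (fun ω => 1 - Z ω) P := (integrable_const 1).sub hZint
  have hZY1int : Integrable (fun ω => Z ω * Y1 ω) P :=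
    hY1int.bdd_mul hZmeas.aestronglyMeasurable (Filter.Eventually.of_forall hZbd)
  have h1ZY1int : Integrable (fun ω => (1 - Z ω) * Y1 ω) P :=
    hY1int.bdd_mul ((measurable_const.sub hZmeas)).aestronglyMeasurable (Filter.Eventually.of_forall h1Zbd)
  -- rewrite Z*Y as Z*Y1
  have hfunZY : (fun ω => Z ω * Y ω) = fun ω => Z ω * Y1 ω := funext hZY
  -- conditional expectation facts
  have hc1 : P[fun ω => Z ω * Y1 ω|mX] =ᵐ[P] fun ω => mu ω * eX ω := by
    rw [← hfunZY]; exact hmu.symm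
  have hc2 : P[fun ω => (1 - Z ω) * Y1 ω|mX]
      =ᵐ[P] fun ω => (1 - eX ω) * (mu ω - del ω) := by
    filter_upwards [hdel, hc1, hov] with ω h h1 ho
    rw [h1] at h
    have he : eX ω ≠ 0 := ne_of_gt ho.1
    have h2 : eX ω * ((P[fun ω' => (1 - Z ω') * Y1 ω'|mX]) ω)
        = eX ω * ((1 - eX ω) * (mu ω - del ω)) := by linear_combination -h
    exact mul_left_cancel₀ he h2
  -- condexp of (1-Z)
  have hcZ : P[fun ω => 1 - Z ω|mX] =ᵐ[P] fun ω => 1 - eX ω := by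
    have h := condExp_sub (m := mX) (μ := P) (integrable_const (1 : ℝ)) hZint
    have hconst : P[fun _ => (1 : ℝ)|mX] = fun _ => (1 : ℝ) := condExp_const hmX 1
    have heq : (fun ω => 1 - Z ω) = ((fun _ => (1:ℝ)) - Z) := rfl
    rw [heq]
    filter_upwards [h, heX] with ω hω he
    simp only [Pi.sub_apply] at hω
    rw [hω, hconst, ← he]
  -- condexp of (1-Z)*del
  have hcdel : P[fun ω => (1 - Z ω) * del ω|mX] =ᵐ[P] fun ω => (1 - eX ω) * del ω := by
    have h := condExp_mul_of_stronglyMeasurable_left (m := mX) (μ := P)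
      hdelmeas.stronglyMeasurable
      (g := fun ω => 1 - Z ω)
      (by exact hintb.congr (Filter.Eventually.of_forall fun ω => by
        simp [Pi.mul_apply, mul_comm]))
      h1Zint
    have h' : P[fun ω => (1 - Z ω) * del ω|mX] =ᵐ[P] del * P[fun ω => 1 - Z ω|mX] := by
      refine (condExp_congr_ae (Filter.Eventually.of_forall fun ω => ?_)).trans h
      simp [Pi.mul_apply, mul_comm]
    filter_upwards [h', hcZ] with ω h1 h2
    rw [h1]; simp only [Pi.mul_apply]; rw [h2]; ring
  -- integrability from condexp
  have hmue_int : Integrable (fun ω => mu ω * eX ω) P := integrable_condExp.congr hc1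
  have hmd_int : Integrable (fun ω => (1 - eX ω) * (mu ω - del ω)) P :=
    integrable_condExp.congr hc2
  have hed_int : Integrable (fun ω => (1 - eX ω) * del ω) P := integrable_condExp.congr hcdel
  -- ∫ (1-Z)*del = ∫ (1-e)*del
  have hIdel : ∫ ω, (1 - Z ω) * del ω ∂P = ∫ ω, (1 - eX ω) * del ω ∂P := by
    rw [← integral_condExp hmX (f := fun ω => (1 - Z ω) * del ω)]
    exact integral_congr_ae hcdel
  -- first identity
  have hfirst : ∫ ω, Y1 ω ∂P = ∫ ω, mu ω ∂P - ∫ ω, (1 - Z ω) * del ω ∂P := by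
    have hsplit : ∫ ω, Y1 ω ∂P
        = ∫ ω, Z ω * Y1 ω ∂P + ∫ ω, (1 - Z ω) * Y1 ω ∂P := by
      rw [← integral_add hZY1int h1ZY1int]
      exact integral_congr_ae (Filter.Eventually.of_forall fun ω => by ring)
    have e1 : ∫ ω, Z ω * Y1 ω ∂P = ∫ ω, mu ω * eX ω ∂P := by
      rw [← integral_condExp hmX (f := fun ω => Z ω * Y1 ω)]
      exact integral_congr_ae hc1
    have e2 : ∫ ω, (1 - Z ω) * Y1 ω ∂P = ∫ ω, (1 - eX ω) * (mu ω - del ω) ∂P := by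
      rw [← integral_condExp hmX (f := fun ω => (1 - Z ω) * Y1 ω)]
      exact integral_congr_ae hc2
    rw [hsplit, e1, e2, hIdel]
    rw [← integral_add hmue_int hmd_int, ← integral_sub hinta hed_int]
    exact integral_congr_ae (Filter.Eventually.of_forall fun ω => by ring)
  -- ∫ Z*Y/e
  have hZYeint : Integrable (fun ω => Z ω * Y ω / eX ω) P := by
    have := hintc.add hintb
    exact this.congr (Filter.Eventually.of_forall fun ω => by
      simp only [Pi.add_apply]; ring)
  have hcZYe : P[fun ω => Z ω * Y ω / eX ω|mX] =ᵐ[P] mu := by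
    have hsm : StronglyMeasurable[mX] (fun ω => (eX ω)⁻¹) :=
      (heXmeas.inv).stronglyMeasurable
    have h := condExp_mul_of_stronglyMeasurable_left (m := mX) (μ := P) hsm
      (g := fun ω => Z ω * Y1 ω)
      (by exact hZYeint.congr (Filter.Eventually.of_forall fun ω => by
        simp only [Pi.mul_apply]; rw [hZY ω]; ring))
      hZY1int
    have h' : P[fun ω => Z ω * Y ω / eX ω|mX]
        =ᵐ[P] (fun ω => (eX ω)⁻¹) * P[fun ω => Z ω * Y1 ω|mX] := by
      refine (condExp_congr_ae (Filter.Eventually.of_forall fun ω => ?_)).trans h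
      simp only [Pi.mul_apply]; rw [hZY ω]; ring
    filter_upwards [h', hc1, hov] with ω h1 h2 ho
    rw [h1]; simp only [Pi.mul_apply]; rw [h2]
    field_simp [ho.1.ne']
  have hIZYe : ∫ ω, Z ω * Y ω / eX ω ∂P = ∫ ω, mu ω ∂P := by
    rw [← integral_condExp hmX (f := fun ω => Z ω * Y ω / eX ω)]
    exact integral_congr_ae hcZYe
  -- second identity
  have hsecond : ∫ ω, Y1 ω ∂P = ∫ ω, (Z ω * Y ω / eX ω - (1 - Z ω) * del ω) ∂P := by
    rw [integral_sub hZYeint hintb, hIZYe, hfirst]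
  -- ∫ Z*mu/e = ∫ mu
  have hZmueint : Integrable (fun ω => Z ω * mu ω / eX ω) P := by
    have h2 : Integrable (fun ω => mu ω - Z ω * mu ω / eX ω) P :=
      (hintd.sub hintc).congr (Filter.Eventually.of_forall fun ω => by
        simp only [Pi.sub_apply]; ring)
    exact (hinta.sub h2).congr (Filter.Eventually.of_forall fun ω => by
      simp only [Pi.sub_apply]; ring)
  have hcZmue : P[fun ω => Z ω * mu ω / eX ω|mX] =ᵐ[P] mu := by
    have hsm : StronglyMeasurable[mX] (fun ω => mu ω * (eX ω)⁻¹) :=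
      (hmumeas.mul heXmeas.inv).stronglyMeasurable
    have h := condExp_mul_of_stronglyMeasurable_left (m := mX) (μ := P) hsm (g := Z)
      (by exact hZmueint.congr (Filter.Eventually.of_forall fun ω => by
        simp only [Pi.mul_apply]; ring))
      hZint
    have h' : P[fun ω => Z ω * mu ω / eX ω|mX]
        =ᵐ[P] (fun ω => mu ω * (eX ω)⁻¹) * P[Z|mX] := by
      refine (condExp_congr_ae (Filter.Eventually.of_forall fun ω => ?_)).trans h
      simp only [Pi.mul_apply]; ring
    filter_upwards [h', heX, hov] with ω h1 h2 ho
    rw [h1]; simp only [Pi.mul_apply]; rw [← h2]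
    field_simp [ho.1.ne']
  have hIZmue : ∫ ω, Z ω * mu ω / eX ω ∂P = ∫ ω, mu ω ∂P := by
    rw [← integral_condExp hmX (f := fun ω => Z ω * mu ω / eX ω)]
    exact integral_congr_ae hcZmue
  -- third identity
  have hthird : ∫ ω, Y1 ω ∂P
      = ∫ ω, (mu ω + Z ω * (Y ω - mu ω) / eX ω - (1 - Z ω) * del ω) ∂P := by
    have hmsub : Integrable (fun ω => mu ω - Z ω * mu ω / eX ω) P :=
      (hinta.sub hZmueint).congr (Filter.Eventually.of_forall fun ω => by
        simp only [Pi.sub_apply])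
    have h1 : ∫ ω, (mu ω + Z ω * (Y ω - mu ω) / eX ω - (1 - Z ω) * del ω) ∂P
        = ∫ ω, (Z ω * Y ω / eX ω - (1 - Z ω) * del ω) ∂P
          + ∫ ω, (mu ω - Z ω * mu ω / eX ω) ∂P := by
      rw [← integral_add hintc hmsub]
      exact integral_congr_ae (Filter.Eventually.of_forall fun ω => by ring)
    have h2 : ∫ ω, (mu ω - Z ω * mu ω / eX ω) ∂P = 0 := by
      rw [integral_sub hinta hZmueint, hIZmue, sub_self]
    rw [h1, h2, add_zero]; exact hsecond
  exact ⟨hfirst, hsecond, hthird⟩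


/-- Identification under sensitivity parameters on the difference scale (Section 6.1). -/
theorem difference_scale_identification
    {Ω : Type*} [F : MeasurableSpace Ω] (P : Measure Ω) [IsProbabilityMeasure P]
    (Z Y1 Y0 Y : Ω → ℝ)
    (hZmeas : Measurable Z) (hZ01 : ∀ ω, Z ω = 0 ∨ Z ω = 1)
    (hY1int : Integrable Y1 P) (hY0int : Integrable Y0 P)
    (hYdef : ∀ ω, Y ω = Z ω * Y1 ω + (1 - Z ω) * Y0 ω)
    (mX : MeasurableSpace Ω) (hmX : mX ≤ F)
    (eX : Ω → ℝ) (heXmeas : Measurable[mX] eX) (heX : eX =ᵐ[P] P[Z|mX])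
    (hov : ∀ᵐ ω ∂P, 0 < eX ω ∧ eX ω < 1)
    (mu1 mu0 : Ω → ℝ) (hmu1meas : Measurable[mX] mu1) (hmu0meas : Measurable[mX] mu0)
    (hmu1 : (fun ω => mu1 ω * eX ω) =ᵐ[P] P[fun ω => Z ω * Y ω|mX])
    (hmu0 : (fun ω => mu0 ω * (1 - eX ω)) =ᵐ[P] P[fun ω => (1 - Z ω) * Y ω|mX])
    (del1 del0 : Ω → ℝ)
    (hdel1meas : Measurable[mX] del1) (hdel0meas : Measurable[mX] del0)
    (hdel1int : Integrable del1 P) (hdel0int : Integrable del0 P)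
    (hdel1 : ∀ᵐ ω ∂P, (1 - eX ω) * (P[fun ω' => Z ω' * Y1 ω'|mX]) ω
        - eX ω * (P[fun ω' => (1 - Z ω') * Y1 ω'|mX]) ω
        = del1 ω * eX ω * (1 - eX ω))
    (hdel0 : ∀ᵐ ω ∂P, (1 - eX ω) * (P[fun ω' => Z ω' * Y0 ω'|mX]) ω
        - eX ω * (P[fun ω' => (1 - Z ω') * Y0 ω'|mX]) ω
        = del0 ω * eX ω * (1 - eX ω))
    (hint1a : Integrable mu1 P)
    (hint1b : Integrable (fun ω => (1 - Z ω) * del1 ω) P)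
    (hint1c : Integrable (fun ω => Z ω * Y ω / eX ω - (1 - Z ω) * del1 ω) P)
    (hint1d : Integrable (fun ω => mu1 ω + Z ω * (Y ω - mu1 ω) / eX ω
        - (1 - Z ω) * del1 ω) P)
    (hint0a : Integrable mu0 P)
    (hint0b : Integrable (fun ω => Z ω * del0 ω) P)
    (hint0c : Integrable (fun ω => (1 - Z ω) * Y ω / (1 - eX ω) + Z ω * del0 ω) P)
    (hint0d : Integrable (fun ω => mu0 ω + (1 - Z ω) * (Y ω - mu0 ω) / (1 - eX ω)
        + Z ω * del0 ω) P) :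
    (∫ ω, Y1 ω ∂P = ∫ ω, mu1 ω ∂P - ∫ ω, (1 - Z ω) * del1 ω ∂P)
    ∧ (∫ ω, Y1 ω ∂P = ∫ ω, (Z ω * Y ω / eX ω - (1 - Z ω) * del1 ω) ∂P)
    ∧ (∫ ω, Y1 ω ∂P
        = ∫ ω, (mu1 ω + Z ω * (Y ω - mu1 ω) / eX ω - (1 - Z ω) * del1 ω) ∂P)
    ∧ (∫ ω, Y0 ω ∂P = ∫ ω, mu0 ω ∂P + ∫ ω, Z ω * del0 ω ∂P)
    ∧ (∫ ω, Y0 ω ∂P = ∫ ω, ((1 - Z ω) * Y ω / (1 - eX ω) + Z ω * del0 ω) ∂P)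
    ∧ (∫ ω, Y0 ω ∂P
        = ∫ ω, (mu0 ω + (1 - Z ω) * (Y ω - mu0 ω) / (1 - eX ω) + Z ω * del0 ω) ∂P) := by
  -- the treated case
  have hZY1 : ∀ ω, Z ω * Y ω = Z ω * Y1 ω := by
    intro ω; rcases hZ01 ω with h | h <;> rw [hYdef ω, h] <;> ring
  obtain ⟨A1, A2, A3⟩ := key_identification (F := F) P Z Y1 Y hZmeas hZ01 hY1int hZY1 mX hmX
    eX heXmeas heX hov mu1 hmu1meas hmu1 del1 hdel1meas hdel1int hdel1
    hint1a hint1b hint1c hint1d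
  -- the control case, via the substitution Z ↦ 1 - Z, e ↦ 1 - e, δ ↦ -δ
  have hZbd : ∀ ω, ‖Z ω‖ ≤ 1 := by
    intro ω; rcases hZ01 ω with h | h <;> simp [h]
  have hZint : Integrable Z P := by
    have := (integrable_const (μ := P) (1 : ℝ)).bdd_mul hZmeas.aestronglyMeasurable (Filter.Eventually.of_forall hZbd)
    simpa using this
  have hZ01' : ∀ ω, 1 - Z ω = 0 ∨ 1 - Z ω = 1 := by
    intro ω; rcases hZ01 ω with h | h
    · right; rw [h]; ring
    · left; rw [h]; ring
  have hZY0 : ∀ ω, (1 - Z ω) * Y ω = (1 - Z ω) * Y0 ω := by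
    intro ω; rcases hZ01 ω with h | h <;> rw [hYdef ω, h] <;> ring
  have heX' : (fun ω => 1 - eX ω) =ᵐ[P] P[fun ω => 1 - Z ω|mX] := by
    have h := condExp_sub (m := mX) (μ := P) (integrable_const (1 : ℝ)) hZint
    have hconst : P[fun _ => (1 : ℝ)|mX] = fun _ => (1 : ℝ) := condExp_const hmX 1
    have heq : (fun ω => 1 - Z ω) = ((fun _ => (1:ℝ)) - Z) := rfl
    rw [heq]
    filter_upwards [h, heX] with ω hω he
    simp only [Pi.sub_apply] at hω
    rw [hω, hconst, ← he]
  have hov' : ∀ᵐ ω ∂P, 0 < 1 - eX ω ∧ 1 - eX ω < 1 := by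
    filter_upwards [hov] with ω h
    exact ⟨by linarith [h.2], by linarith [h.1]⟩
  have hdel0' : ∀ᵐ ω ∂P, (1 - (1 - eX ω)) * (P[fun ω' => (1 - Z ω') * Y0 ω'|mX]) ω
      - (1 - eX ω) * (P[fun ω' => (1 - (1 - Z ω')) * Y0 ω'|mX]) ω
      = (-del0 ω) * (1 - eX ω) * (1 - (1 - eX ω)) := by
    have hfe : (fun ω' => (1 - (1 - Z ω')) * Y0 ω') = (fun ω' => Z ω' * Y0 ω') :=
      funext fun ω => by ring
    rw [hfe]
    filter_upwards [hdel0] with ω h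
    linear_combination -h
  have hint0b' : Integrable (fun ω => (1 - (1 - Z ω)) * (-del0 ω)) P :=
    hint0b.neg.congr (Filter.Eventually.of_forall fun ω => by
      simp only [Pi.neg_apply]; ring)
  have hint0c' : Integrable (fun ω => (1 - Z ω) * Y ω / (1 - eX ω)
      - (1 - (1 - Z ω)) * (-del0 ω)) P :=
    hint0c.congr (Filter.Eventually.of_forall fun ω => by ring)
  have hint0d' : Integrable (fun ω => mu0 ω + (1 - Z ω) * (Y ω - mu0 ω) / (1 - eX ω)
      - (1 - (1 - Z ω)) * (-del0 ω)) P :=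
    hint0d.congr (Filter.Eventually.of_forall fun ω => by ring)
  obtain ⟨B1, B2, B3⟩ := key_identification (F := F) P (fun ω => 1 - Z ω) Y0 Y
    (measurable_const.sub hZmeas) hZ01' hY0int hZY0 mX hmX
    (fun ω => 1 - eX ω) (measurable_const.sub heXmeas) heX' hov'
    mu0 hmu0meas hmu0 (fun ω => -del0 ω) hdel0meas.neg hdel0int.neg hdel0'
    hint0a hint0b' hint0c' hint0d'
  beta_reduce at B1 B2 B3
  have c1 : ∫ ω, (1 - (1 - Z ω)) * (-del0 ω) ∂P = - ∫ ω, Z ω * del0 ω ∂P := by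
    rw [← integral_neg]
    exact integral_congr_ae (Filter.Eventually.of_forall fun ω => by
      simp only [Pi.neg_apply]; ring)
  refine ⟨A1, A2, A3, ?_, ?_, ?_⟩
  · rw [B1, c1, sub_neg_eq_add]
  · rw [B2]
    exact integral_congr_ae (Filter.Eventually.of_forall fun ω => by ring)
  · rw [B3]
    exact integral_congr_ae (Filter.Eventually.of_forall fun ω => by ring)
end

section
/- (Connection to the treatment selection model for a binary outcome, Section S1.8.) Suppose the potential outcome Y(1) takes values in {0,1}. Let e⁽¹⁾(X) and e⁽⁰⁾(X) be 𝔛-measurable functions satisfying e⁽¹⁾(X)·E[Y(1) ∣ 𝔛] = E[Z·Y(1) ∣ 𝔛] and e⁽⁰⁾(X)·E[1−Y(1) ∣ 𝔛] = E[Z·(1−Y(1)) ∣ 𝔛] almost surely (these are versions of the selection probabilities E[Z ∣ X, Y(1)=1] and E[Z ∣ X, Y(1)=0]). Then, with w1(X) = e(X) + (1−e(X))/ε1(X), almost surely e(X) = e⁽¹⁾(X)·w1(X)·μ1(X) + e⁽⁰⁾(X)·(1 − w1(X)·μ1(X)). -/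
open MeasureTheory

/-- Connection to the treatment selection model for a binary outcome (Section S1.8). -/
theorem treatment_selection_model_binary_outcome
    {Ω : Type*} [F : MeasurableSpace Ω] (P : Measure Ω) [IsProbabilityMeasure P]
    (Z Y1 Y0 Y : Ω → ℝ)
    (hZmeas : Measurable Z) (hZ01 : ∀ ω, Z ω = 0 ∨ Z ω = 1)
    (hY1int : Integrable Y1 P) (hY0int : Integrable Y0 P)
    (hYdef : ∀ ω, Y ω = Z ω * Y1 ω + (1 - Z ω) * Y0 ω)
    (mX : MeasurableSpace Ω) (hmX : mX ≤ F)
    (eX : Ω → ℝ) (heXmeas : Measurable[mX] eX) (heX : eX =ᵐ[P] P[Z|mX])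
    (hov : ∀ᵐ ω ∂P, 0 < eX ω ∧ eX ω < 1)
    (mu1 : Ω → ℝ) (hmu1meas : Measurable[mX] mu1)
    (hmu1 : (fun ω => mu1 ω * eX ω) =ᵐ[P] P[fun ω => Z ω * Y ω|mX])
    (eps1 : Ω → ℝ) (heps1meas : Measurable[mX] eps1)
    (heps1pos : ∀ᵐ ω ∂P, 0 < eps1 ω)
    (hsens1 : ∀ᵐ ω ∂P, (1 - eX ω) * (P[fun ω' => Z ω' * Y1 ω'|mX]) ω
        = eps1 ω * eX ω * (P[fun ω' => (1 - Z ω') * Y1 ω'|mX]) ω)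
    (hY1bin : ∀ ω, Y1 ω = 0 ∨ Y1 ω = 1)
    (e1sel e0sel : Ω → ℝ)
    (he1selmeas : Measurable[mX] e1sel) (he0selmeas : Measurable[mX] e0sel)
    (he1sel : (fun ω => e1sel ω * (P[Y1|mX]) ω)
        =ᵐ[P] P[fun ω => Z ω * Y1 ω|mX])
    (he0sel : (fun ω => e0sel ω * (P[fun ω' => 1 - Y1 ω'|mX]) ω)
        =ᵐ[P] P[fun ω => Z ω * (1 - Y1 ω)|mX]) :
    ∀ᵐ ω ∂P, eX ω
      = e1sel ω * ((eX ω + (1 - eX ω) / eps1 ω) * mu1 ω)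
        + e0sel ω * (1 - (eX ω + (1 - eX ω) / eps1 ω) * mu1 ω) := by

  have hZint : Integrable Z P := by
    refine Integrable.mono' (integrable_const 1) hZmeas.aestronglyMeasurable ?_
    filter_upwards with ω
    rcases hZ01 ω with h | h <;> simp [h]
  have hZY1int : Integrable (fun ω => Z ω * Y1 ω) P := by
    refine Integrable.mono' hY1int.abs
      (hZmeas.aestronglyMeasurable.mul hY1int.aestronglyMeasurable) ?_
    filter_upwards with ω
    rcases hZ01 ω with h | h <;> simp [h, Real.norm_eq_abs, abs_nonneg]
  have h1ZY1int : Integrable (fun ω => (1 - Z ω) * Y1 ω) P := by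
    refine Integrable.mono' hY1int.abs
      (((aestronglyMeasurable_const.sub hZmeas.aestronglyMeasurable)).mul
        hY1int.aestronglyMeasurable) ?_
    filter_upwards with ω
    rcases hZ01 ω with h | h <;> simp [h, Real.norm_eq_abs, abs_nonneg]
  have hAeq : P[fun ω => Z ω * Y ω|mX] =ᵐ[P] P[fun ω => Z ω * Y1 ω|mX] := by
    refine condExp_congr_ae (Filter.Eventually.of_forall fun ω => ?_)
    rcases hZ01 ω with h | h <;> simp [hYdef ω, h]
  have hC : P[Y1|mX] =ᵐ[P]
      P[fun ω => Z ω * Y1 ω|mX] + P[fun ω => (1 - Z ω) * Y1 ω|mX] := by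
    have hfun : Y1 = (fun ω => Z ω * Y1 ω) + (fun ω => (1 - Z ω) * Y1 ω) := by
      funext ω
      show Y1 ω = Z ω * Y1 ω + (1 - Z ω) * Y1 ω
      ring
    have h1 : P[Y1|mX]
        = P[(fun ω => Z ω * Y1 ω) + (fun ω => (1 - Z ω) * Y1 ω)|mX] := by
      rw [← hfun]
    rw [h1]
    exact condExp_add hZY1int h1ZY1int mX
  have hD : P[fun ω => 1 - Y1 ω|mX] =ᵐ[P] fun ω => 1 - (P[Y1|mX]) ω := by
    have h1 : P[fun ω => 1 - Y1 ω|mX] = P[(fun _ => (1:ℝ)) - Y1|mX] := rfl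
    rw [h1]
    refine (condExp_sub (integrable_const 1) hY1int mX).trans ?_
    rw [condExp_const hmX]
    exact Filter.Eventually.of_forall fun ω => rfl
  have hE : P[fun ω => Z ω * (1 - Y1 ω)|mX] =ᵐ[P]
      fun ω => (P[Z|mX]) ω - (P[fun ω' => Z ω' * Y1 ω'|mX]) ω := by
    have hfun : (fun ω => Z ω * (1 - Y1 ω)) = Z - (fun ω => Z ω * Y1 ω) := by
      funext ω
      show Z ω * (1 - Y1 ω) = Z ω - Z ω * Y1 ω
      ring
    have h1 : P[fun ω => Z ω * (1 - Y1 ω)|mX]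
        = P[Z - (fun ω => Z ω * Y1 ω)|mX] := by
      rw [← hfun]
    rw [h1]
    refine (condExp_sub hZint hZY1int mX).trans ?_
    exact Filter.Eventually.of_forall fun ω => rfl
  filter_upwards [heX, hmu1, hsens1, heps1pos, hov, he1sel, he0sel, hAeq, hC,
    hD, hE] with ω h1 h2 h3 h4 h5 h6 h7 h8 h9 h10 h11
  have hmua : mu1 ω * eX ω = (P[fun ω' => Z ω' * Y1 ω'|mX]) ω := h2.trans h8
  have hb : (1 - eX ω) * mu1 ω
      = eps1 ω * (P[fun ω' => (1 - Z ω') * Y1 ω'|mX]) ω := by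
    have h3' : (1 - eX ω) * (mu1 ω * eX ω)
        = eps1 ω * eX ω * (P[fun ω' => (1 - Z ω') * Y1 ω'|mX]) ω := by
      rw [hmua]; exact h3
    have hne : eX ω ≠ 0 := ne_of_gt h5.1
    field_simp at h3' ⊢
    nlinarith [h3']
  have hw : (eX ω + (1 - eX ω) / eps1 ω) * mu1 ω = (P[Y1|mX]) ω := by
    have h9' : (P[Y1|mX]) ω = (P[fun ω' => Z ω' * Y1 ω'|mX]) ω
        + (P[fun ω' => (1 - Z ω') * Y1 ω'|mX]) ω := h9
    have hne : eps1 ω ≠ 0 := ne_of_gt h4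
    field_simp
    nlinarith [hmua, hb, h9']
  rw [hw, ← h10, h6, h7, h11]
  linarith [h1]
end

section
/- (Calibration identity under unconfoundedness, Section 4.1.) Assume unconfoundedness: Z is conditionally independent of (Y(1), Y(0)) given 𝔛. Then for z ∈ {0,1} and any sub-σ-algebra 𝒢 ⊆ 𝔛, one has almost surely E[Z·Y(z) ∣ 𝒢] = E[Z·μ_z(X) ∣ 𝒢] and E[(1−Z)·Y(z) ∣ 𝒢] = E[(1−Z)·μ_z(X) ∣ 𝒢]. Consequently, the leave-covariates-out sensitivity parameter satisfies, almost surely on the set where the denominators are nonzero, ε_z(𝒢) := ( E[Z·Y(z) ∣ 𝒢]·E[1−Z ∣ 𝒢] ) / ( E[(1−Z)·Y(z) ∣ 𝒢]·E[Z ∣ 𝒢] ) = ( E[Z·μ_z(X) ∣ 𝒢]·E[1−Z ∣ 𝒢] ) / ( E[(1−Z)·μ_z(X) ∣ 𝒢]·E[Z ∣ 𝒢] ), i.e., ε_z(X_{−j}) = E[μ_z(X) ∣ Z=1, X_{−j}] / E[μ_z(X) ∣ Z=0, X_{−j}]. -/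
open MeasureTheory

open ProbabilityTheory in
/-- Transfer conditional independence along a.e. equality of the second function. -/
lemma condIndepFun_ae_right_aux
    {Ω : Type*} {mX : MeasurableSpace Ω} [F : MeasurableSpace Ω] [StandardBorelSpace Ω]
    {P : Measure Ω} [IsProbabilityMeasure P] (hmX : mX ≤ F)
    {β γ : Type*} [MeasurableSpace β] [MeasurableSpace γ]
    {Z : Ω → β} {W W' : Ω → γ}
    (h : CondIndepFun mX hmX Z W P) (hWW' : W =ᵐ[P] W') :
    CondIndepFun mX hmX Z W' P := by
  refine Kernel.IndepFun.congr' h (Filter.Eventually.of_forall fun a => ?_) ?_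
  · exact Filter.EventuallyEq.rfl
  · have hnull : P {ω | W ω ≠ W' ω} = 0 := by
      simpa [Filter.EventuallyEq, ae_iff] using hWW'
    obtain ⟨N, hNsub, hNmeas, hN0⟩ := exists_measurable_superset_of_null hnull
    have hcond0 : (P⟦N|mX⟧) =ᵐ[P] (0 : Ω → ℝ) := by
      have hind : (N.indicator fun _ => (1 : ℝ)) =ᵐ[P] (0 : Ω → ℝ) := by
        have hae : ∀ᵐ ω ∂P, ω ∉ N := by
          rw [ae_iff]; simpa using hN0
        filter_upwards [hae] with ω hω
        simp [Set.indicator_of_notMem hω]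
      calc (P⟦N|mX⟧) =ᵐ[P] P[(0 : Ω → ℝ)|mX] := condExp_congr_ae hind
        _ = (0 : Ω → ℝ) := condExp_zero
    have hcond0' : (P⟦N|mX⟧) =ᵐ[P.trim hmX] (0 : Ω → ℝ) :=
      StronglyMeasurable.ae_eq_trim_of_stronglyMeasurable hmX stronglyMeasurable_condExp
        stronglyMeasurable_zero hcond0
    have hker := condExpKernel_ae_eq_trim_condExp (μ := P) hmX hNmeas
    filter_upwards [hker, hcond0'] with a ha hb
    have htr : (condExpKernel P mX a N).toReal = 0 := by
      rw [← measureReal_def, ha, hb]; rfl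
    have hfin : condExpKernel P mX a N ≠ ⊤ := measure_ne_top _ _
    have hN0' : condExpKernel P mX a N = 0 := by
      rcases ENNReal.toReal_eq_zero_iff _ |>.mp htr with h0 | h0
      · exact h0
      · exact absurd h0 hfin
    exact measure_mono_null hNsub hN0'

/-- Generic approximation lemma: if two a.e.-bounded multipliers integrate equally
against all indicators of `T`-measurable sets over `s`, they integrate equally against all
`T`-measurable integrable functions over `s`. -/
lemma integral_mul_eq_of_indicator_aux
    {Ω : Type*} {T : MeasurableSpace Ω} [F : MeasurableSpace Ω]
    {P : Measure Ω} [IsProbabilityMeasure P] (hT : T ≤ F)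
    {u v : Ω → ℝ} (hu : AEStronglyMeasurable u P) (hubd : ∀ᵐ ω ∂P, ‖u ω‖ ≤ 1)
    (hv : AEStronglyMeasurable v P) (hvbd : ∀ᵐ ω ∂P, ‖v ω‖ ≤ 1)
    {s : Set Ω} (hsF : MeasurableSet s)
    (hbase : ∀ B : Set Ω, MeasurableSet[T] B →
      ∫ ω in s, u ω * B.indicator (fun _ => (1 : ℝ)) ω ∂P
        = ∫ ω in s, v ω * B.indicator (fun _ => (1 : ℝ)) ω ∂P) :
    ∀ ⦃g : Ω → ℝ⦄, Integrable g (P.trim hT) →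
      ∫ ω in s, u ω * g ω ∂P = ∫ ω in s, v ω * g ω ∂P := by
  have hcont : ∀ w : Ω → ℝ, AEStronglyMeasurable w P → (∀ᵐ ω ∂P, ‖w ω‖ ≤ 1) →
      Continuous (fun g : Lp ℝ 1 (P.trim hT) => ∫ ω in s, w ω * (g : Ω → ℝ) ω ∂P) := by
    intro w hw hwbd
    refine (LipschitzWith.of_dist_le_mul (K := 1) fun g1 g2 => ?_).continuous
    have hg1 : Integrable (g1 : Ω → ℝ) P :=
      integrable_of_integrable_trim hT (L1.integrable_coeFn g1)
    have hg2 : Integrable (g2 : Ω → ℝ) P :=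
      integrable_of_integrable_trim hT (L1.integrable_coeFn g2)
    have hwg1 : Integrable (fun ω => w ω * (g1 : Ω → ℝ) ω) P := hg1.bdd_mul hw hwbd
    have hwg2 : Integrable (fun ω => w ω * (g2 : Ω → ℝ) ω) P := hg2.bdd_mul hw hwbd
    set d : Ω → ℝ := fun ω => (g1 : Ω → ℝ) ω - (g2 : Ω → ℝ) ω with hd
    have hdiff : Integrable d P := hg1.sub hg2
    have hwd : Integrable (fun ω => w ω * d ω) P := hdiff.bdd_mul hw hwbd
    have hsub : ∫ ω in s, w ω * (g1 : Ω → ℝ) ω ∂P - ∫ ω in s, w ω * (g2 : Ω → ℝ) ω ∂P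
        = ∫ ω in s, w ω * d ω ∂P := by
      rw [← integral_sub hwg1.integrableOn hwg2.integrableOn]
      congr 1; funext ω; simp only [hd]; ring
    rw [Real.dist_eq, hsub]
    have step1 : |∫ ω in s, w ω * d ω ∂P| ≤ ∫ ω in s, |w ω * d ω| ∂P := by
      have h := norm_integral_le_integral_norm (μ := P.restrict s) (f := fun ω => w ω * d ω)
      simpa only [Real.norm_eq_abs] using h
    have step2 : ∫ ω in s, |w ω * d ω| ∂P ≤ ∫ ω in s, |d ω| ∂P := by
      refine integral_mono_ae hwd.abs.integrableOn hdiff.abs.integrableOn ?_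
      refine ae_restrict_of_ae ?_
      filter_upwards [hwbd] with ω hω
      calc |w ω * d ω| = |w ω| * |d ω| := abs_mul _ _
        _ ≤ 1 * |d ω| :=
            mul_le_mul_of_nonneg_right (by rwa [Real.norm_eq_abs] at hω) (abs_nonneg _)
        _ = |d ω| := one_mul _
    have step3 : ∫ ω in s, |d ω| ∂P ≤ ∫ ω, |d ω| ∂P :=
      setIntegral_le_integral hdiff.abs (Filter.Eventually.of_forall fun ω => abs_nonneg _)
    have hdmeasT : AEStronglyMeasurable[T] (fun ω => |d ω|) (P.trim hT) := by
      have h := ((Lp.aestronglyMeasurable g1).sub (Lp.aestronglyMeasurable g2)).norm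
      simpa [Real.norm_eq_abs] using h
    have step4 : ∫ ω, |d ω| ∂P = ∫ ω, |d ω| ∂(P.trim hT) := integral_trim_ae hT hdmeasT
    have step5 : ∫ ω, |d ω| ∂(P.trim hT) = ‖g1 - g2‖ := by
      rw [L1.norm_eq_integral_norm]
      refine integral_congr_ae ?_
      filter_upwards [Lp.coeFn_sub g1 g2] with ω hω
      rw [hω]
      simp [hd, Real.norm_eq_abs]
    have hfinal : |∫ ω in s, w ω * d ω ∂P| ≤ dist g1 g2 := by
      rw [dist_eq_norm]
      calc |∫ ω in s, w ω * d ω ∂P| ≤ ∫ ω in s, |w ω * d ω| ∂P := step1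
        _ ≤ ∫ ω in s, |d ω| ∂P := step2
        _ ≤ ∫ ω, |d ω| ∂P := step3
        _ = ‖g1 - g2‖ := by rw [step4, step5]
    simpa using hfinal
  refine @Integrable.induction Ω ℝ T _ (P.trim hT)
    (fun g => ∫ ω in s, u ω * g ω ∂P = ∫ ω in s, v ω * g ω ∂P) ?_ ?_ ?_ ?_
  · rintro c B hB -
    have h1 : ∀ w : Ω → ℝ, (fun ω => w ω * (B.indicator fun _ => c) ω)
        = fun ω => c * (w ω * B.indicator (fun _ => (1 : ℝ)) ω) := by
      intro w; funext ω
      by_cases h : ω ∈ B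
      · simp only [Set.indicator_of_mem h]; ring
      · simp only [Set.indicator_of_notMem h]; ring
    rw [h1 u, h1 v, integral_const_mul, integral_const_mul, hbase B hB]
  · intro g1 g2 _ hg1t hg2t ih1 ih2
    have hg1 : Integrable g1 P := integrable_of_integrable_trim hT hg1t
    have hg2 : Integrable g2 P := integrable_of_integrable_trim hT hg2t
    have hug1 : Integrable (fun ω => u ω * g1 ω) P := hg1.bdd_mul hu hubd
    have hug2 : Integrable (fun ω => u ω * g2 ω) P := hg2.bdd_mul hu hubd
    have hvg1 : Integrable (fun ω => v ω * g1 ω) P := hg1.bdd_mul hv hvbd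
    have hvg2 : Integrable (fun ω => v ω * g2 ω) P := hg2.bdd_mul hv hvbd
    have e1 : (fun ω => u ω * (g1 + g2) ω) = fun ω => u ω * g1 ω + u ω * g2 ω := by
      funext ω; simp [mul_add]
    have e2 : (fun ω => v ω * (g1 + g2) ω) = fun ω => v ω * g1 ω + v ω * g2 ω := by
      funext ω; simp [mul_add]
    rw [e1, e2, integral_add hug1.integrableOn hug2.integrableOn,
      integral_add hvg1.integrableOn hvg2.integrableOn, ih1, ih2]
  · exact isClosed_eq (hcont u hu hubd) (hcont v hv hvbd)
  · intro g1 g2 hae _ ih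
    have haeP : g1 =ᵐ[P] g2 := ae_eq_of_ae_eq_trim hae
    have c1 : ∫ ω in s, u ω * g2 ω ∂P = ∫ ω in s, u ω * g1 ω ∂P := by
      refine setIntegral_congr_ae hsF ?_
      filter_upwards [haeP] with ω hω _
      rw [hω]
    have c2 : ∫ ω in s, v ω * g1 ω ∂P = ∫ ω in s, v ω * g2 ω ∂P := by
      refine setIntegral_congr_ae hsF ?_
      filter_upwards [haeP] with ω hω _
      rw [hω]
    rw [c1, ih, c2]

open ProbabilityTheory in
/-- Product rule for conditional expectation with a `{0,1}`-valued factor, under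
conditional independence. -/
lemma condExp_mul_of_condIndepFun_aux
    {Ω : Type*} {mX : MeasurableSpace Ω} [F : MeasurableSpace Ω] [StandardBorelSpace Ω]
    {P : Measure Ω} [IsProbabilityMeasure P] (hmX : mX ≤ F)
    {Z f : Ω → ℝ} (hZmeas : Measurable Z) (hZ01 : ∀ ω, Z ω = 0 ∨ Z ω = 1)
    (hfmeas : Measurable f) (hfint : Integrable f P)
    (hindep : CondIndepFun mX hmX Z f P) :
    P[fun ω => Z ω * f ω|mX] =ᵐ[P] fun ω => (P[Z|mX]) ω * (P[f|mX]) ω := by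
  have hZ0 : ∀ ω, 0 ≤ Z ω := fun ω => by rcases hZ01 ω with h | h <;> simp [h]
  have hZle : ∀ ω, Z ω ≤ 1 := fun ω => by rcases hZ01 ω with h | h <;> simp [h]
  have hZbd : ∀ᵐ ω ∂P, ‖Z ω‖ ≤ 1 :=
    Filter.Eventually.of_forall fun ω => by
      rw [Real.norm_eq_abs, abs_of_nonneg (hZ0 ω)]; exact hZle ω
  have hZint : Integrable Z P :=
    (integrable_const (1 : ℝ)).mono' hZmeas.aestronglyMeasurable (by simpa using hZbd)
  set eZ : Ω → ℝ := P[Z|mX] with heZdef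
  have heZ0 : 0 ≤ᵐ[P] eZ := condExp_nonneg (Filter.Eventually.of_forall hZ0)
  have heZ1 : eZ ≤ᵐ[P] fun _ => (1 : ℝ) := by
    have h := condExp_mono (μ := P) (m := mX) hZint (integrable_const (1 : ℝ))
      (Filter.Eventually.of_forall hZle)
    rwa [condExp_const hmX] at h
  have heZbd : ∀ᵐ ω ∂P, ‖eZ ω‖ ≤ 1 := by
    filter_upwards [heZ0, heZ1] with ω h0 h1
    rw [Real.norm_eq_abs, abs_of_nonneg h0]; exact h1
  have heZsm : StronglyMeasurable[mX] eZ := stronglyMeasurable_condExp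
  have heZae : AEStronglyMeasurable eZ P := (heZsm.mono hmX).aestronglyMeasurable
  -- the set where Z = 1
  have hAmeas : MeasurableSet (Z ⁻¹' {1}) := hZmeas (measurableSet_singleton 1)
  have hZind : Z = Set.indicator (Z ⁻¹' {1}) fun _ => (1 : ℝ) := by
    funext ω
    rcases hZ01 ω with h | h
    · have hω : ω ∉ Z ⁻¹' {1} := by simp [Set.mem_preimage, h]
      simp [Set.indicator_of_notMem hω, h]
    · have hω : ω ∈ Z ⁻¹' {1} := by simp [Set.mem_preimage, h]
      simp [Set.indicator_of_mem hω, h]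
  have hcondA : (P⟦Z ⁻¹' {1}|mX⟧) = eZ := by rw [heZdef]; conv_rhs => rw [hZind]
  -- conditional independence in conditional-expectation form
  have hset : ∀ t : Set ℝ, MeasurableSet t →
      (P⟦Z ⁻¹' {1} ∩ f ⁻¹' t|mX⟧) =ᵐ[P]
        fun ω => (P⟦Z ⁻¹' {1}|mX⟧) ω * (P⟦f ⁻¹' t|mX⟧) ω :=
    fun t ht => (condIndepFun_iff_condExp_inter_preimage_eq_mul hZmeas hfmeas).mp hindep
      {1} t (measurableSet_singleton 1) ht
  -- the σ-algebra generated by f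
  have hT : MeasurableSpace.comap f inferInstance ≤ F := measurable_iff_comap_le.mp hfmeas
  have hfT : Measurable[MeasurableSpace.comap f inferInstance] f :=
    measurable_iff_comap_le.mpr le_rfl
  have hfTint : Integrable f (P.trim hT) := hfint.trim hT hfT.stronglyMeasurable
  -- pull-out helper
  have helper : ∀ s : Set Ω, MeasurableSet[mX] s → ∀ h : Ω → ℝ, Integrable h P →
      ∫ ω in s, eZ ω * h ω ∂P = ∫ ω in s, eZ ω * (P[h|mX]) ω ∂P := by
    intro s hs h hint
    have hsF : MeasurableSet s := hmX s hs
    have hgsm : StronglyMeasurable[mX] (s.indicator eZ) := heZsm.indicator hs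
    have hgbd : ∀ᵐ ω ∂P, ‖s.indicator eZ ω‖ ≤ 1 := by
      filter_upwards [heZbd] with ω hω
      by_cases hmem : ω ∈ s
      · rwa [Set.indicator_of_mem hmem]
      · simp [Set.indicator_of_notMem hmem]
    have hgae : AEStronglyMeasurable (s.indicator eZ) P :=
      (hgsm.mono hmX).aestronglyMeasurable
    have h1 : Integrable (fun ω => s.indicator eZ ω * h ω) P := hint.bdd_mul hgae hgbd
    have hpull : P[fun ω => s.indicator eZ ω * h ω|mX]
        =ᵐ[P] fun ω => s.indicator eZ ω * (P[h|mX]) ω := by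
      have hp := condExp_mul_of_stronglyMeasurable_left (μ := P) hgsm
        (by exact h1) hint
      exact hp
    have hindmul : ∀ k : Ω → ℝ,
        (fun ω => s.indicator (fun ω' => eZ ω' * k ω') ω)
          = fun ω => s.indicator eZ ω * k ω := by
      intro k; funext ω
      by_cases hmem : ω ∈ s
      · simp [Set.indicator_of_mem hmem]
      · simp [Set.indicator_of_notMem hmem]
    calc ∫ ω in s, eZ ω * h ω ∂P
        = ∫ ω, s.indicator eZ ω * h ω ∂P := by
          rw [← integral_indicator hsF]
          simp_rw [hindmul h]
      _ = ∫ ω, (P[fun ω => s.indicator eZ ω * h ω|mX]) ω ∂P := (integral_condExp hmX).symm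
      _ = ∫ ω, s.indicator eZ ω * (P[h|mX]) ω ∂P := integral_congr_ae hpull
      _ = ∫ ω in s, eZ ω * (P[h|mX]) ω ∂P := by
          rw [← integral_indicator hsF]
          simp_rw [hindmul (P[h|mX])]
  -- base case: indicators of sets generated by f
  have hbase : ∀ s : Set Ω, MeasurableSet[mX] s →
      ∀ B : Set Ω, MeasurableSet[MeasurableSpace.comap f inferInstance] B →
      ∫ ω in s, Z ω * B.indicator (fun _ => (1 : ℝ)) ω ∂P
        = ∫ ω in s, eZ ω * B.indicator (fun _ => (1 : ℝ)) ω ∂P := by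
    intro s hs B hB
    obtain ⟨t, ht, rfl⟩ := hB
    have hsF : MeasurableSet s := hmX s hs
    have hBF : MeasurableSet (f ⁻¹' t) := hfmeas ht
    have hABint : Integrable ((Z ⁻¹' {1} ∩ f ⁻¹' t).indicator fun _ => (1 : ℝ)) P :=
      (integrable_const (1 : ℝ)).indicator (hAmeas.inter hBF)
    have hBint : Integrable ((f ⁻¹' t).indicator fun _ => (1 : ℝ)) P :=
      (integrable_const (1 : ℝ)).indicator hBF
    have hZmul : (fun ω => Z ω * (f ⁻¹' t).indicator (fun _ => (1 : ℝ)) ω)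
        = fun ω => ((Z ⁻¹' {1} ∩ f ⁻¹' t).indicator fun _ => (1 : ℝ)) ω := by
      funext ω
      by_cases hωB : ω ∈ f ⁻¹' t
      · rcases hZ01 ω with h | h
        · have hω : ω ∉ Z ⁻¹' {1} ∩ f ⁻¹' t := by
            simp [Set.mem_inter_iff, Set.mem_preimage, h]
          simp [Set.indicator_of_mem hωB, Set.indicator_of_notMem hω, h]
        · have hω : ω ∈ Z ⁻¹' {1} ∩ f ⁻¹' t := by
            simp [Set.mem_inter_iff, Set.mem_preimage, h, hωB]
          simp [Set.indicator_of_mem hωB, Set.indicator_of_mem hω, h]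
      · have hω : ω ∉ Z ⁻¹' {1} ∩ f ⁻¹' t := fun hc => hωB hc.2
        simp [Set.indicator_of_notMem hωB, Set.indicator_of_notMem hω]
    calc ∫ ω in s, Z ω * (f ⁻¹' t).indicator (fun _ => (1 : ℝ)) ω ∂P
        = ∫ ω in s, ((Z ⁻¹' {1} ∩ f ⁻¹' t).indicator fun _ => (1 : ℝ)) ω ∂P := by
          rw [hZmul]
      _ = ∫ ω in s, (P⟦Z ⁻¹' {1} ∩ f ⁻¹' t|mX⟧) ω ∂P :=
          (setIntegral_condExp hmX hABint hs).symm
      _ = ∫ ω in s, (P⟦Z ⁻¹' {1}|mX⟧) ω * (P⟦f ⁻¹' t|mX⟧) ω ∂P := by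
          refine setIntegral_congr_ae hsF ?_
          filter_upwards [hset t ht] with ω hω _
          exact hω
      _ = ∫ ω in s, eZ ω * (P⟦f ⁻¹' t|mX⟧) ω ∂P := by rw [hcondA]
      _ = ∫ ω in s, eZ ω * ((f ⁻¹' t).indicator fun _ => (1 : ℝ)) ω ∂P :=
          (helper s hs ((f ⁻¹' t).indicator fun _ => (1 : ℝ)) hBint).symm
  -- conclude via uniqueness of conditional expectation
  have hZfint : Integrable (fun ω => Z ω * f ω) P :=
    hfint.bdd_mul hZmeas.aestronglyMeasurable hZbd
  have hgint : Integrable (fun ω => eZ ω * (P[f|mX]) ω) P :=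
    integrable_condExp.bdd_mul heZae heZbd
  refine (ae_eq_condExp_of_forall_setIntegral_eq hmX hZfint
    (fun s _ _ => hgint.integrableOn) (fun s hs _ => ?_) ?_).symm
  · have hmain := integral_mul_eq_of_indicator_aux hT hZmeas.aestronglyMeasurable hZbd
      heZae heZbd (hmX s hs) (hbase s hs) hfTint
    rw [← helper s hs f hfint, ← hmain]
  · exact (heZsm.mul stronglyMeasurable_condExp).aestronglyMeasurable

open ProbabilityTheory in
lemma calibration_master
    {Ω : Type*} {mX mG : MeasurableSpace Ω}
    [F : MeasurableSpace Ω] [StandardBorelSpace Ω]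
    (P : Measure Ω) [IsProbabilityMeasure P]
    (Z Y1 Y0 Y : Ω → ℝ)
    (hZmeas : Measurable Z) (hZ01 : ∀ ω, Z ω = 0 ∨ Z ω = 1)
    (hY1int : Integrable Y1 P) (hY0int : Integrable Y0 P)
    (hYdef : ∀ ω, Y ω = Z ω * Y1 ω + (1 - Z ω) * Y0 ω)
    (hmX : mX ≤ F)
    (eX : Ω → ℝ) (heX : eX =ᵐ[P] P[Z|mX])
    (hov : ∀ᵐ ω ∂P, 0 < eX ω ∧ eX ω < 1)
    (mu1 mu0 : Ω → ℝ) (hmu1meas : Measurable[mX] mu1) (hmu0meas : Measurable[mX] mu0)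
    (hmu1 : (fun ω => mu1 ω * eX ω) =ᵐ[P] P[fun ω => Z ω * Y ω|mX])
    (hmu0 : (fun ω => mu0 ω * (1 - eX ω)) =ᵐ[P] P[fun ω => (1 - Z ω) * Y ω|mX])
    (hunconf : ProbabilityTheory.CondIndepFun mX hmX Z (fun ω => (Y1 ω, Y0 ω)) P)
    (hmG : mG ≤ mX)
    (hintZmu1 : Integrable (fun ω => Z ω * mu1 ω) P)
    (hintZmu0 : Integrable (fun ω => Z ω * mu0 ω) P)
    (hint1mZmu1 : Integrable (fun ω => (1 - Z ω) * mu1 ω) P)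
    (hint1mZmu0 : Integrable (fun ω => (1 - Z ω) * mu0 ω) P) :
    (P[fun ω => Z ω * Y1 ω|mG] =ᵐ[P] P[fun ω => Z ω * mu1 ω|mG])
    ∧ (P[fun ω => (1 - Z ω) * Y1 ω|mG] =ᵐ[P] P[fun ω => (1 - Z ω) * mu1 ω|mG])
    ∧ (P[fun ω => Z ω * Y0 ω|mG] =ᵐ[P] P[fun ω => Z ω * mu0 ω|mG])
    ∧ (P[fun ω => (1 - Z ω) * Y0 ω|mG] =ᵐ[P] P[fun ω => (1 - Z ω) * mu0 ω|mG])
    ∧ (∀ᵐ ω ∂P,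
        (P[fun ω' => (1 - Z ω') * Y1 ω'|mG]) ω ≠ 0 →
        (P[fun ω' => (1 - Z ω') * mu1 ω'|mG]) ω ≠ 0 →
        (P[Z|mG]) ω ≠ 0 →
        (P[fun ω' => Z ω' * Y1 ω'|mG]) ω * (P[fun ω' => 1 - Z ω'|mG]) ω
            / ((P[fun ω' => (1 - Z ω') * Y1 ω'|mG]) ω * (P[Z|mG]) ω)
          = (P[fun ω' => Z ω' * mu1 ω'|mG]) ω * (P[fun ω' => 1 - Z ω'|mG]) ω
            / ((P[fun ω' => (1 - Z ω') * mu1 ω'|mG]) ω * (P[Z|mG]) ω))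
    ∧ (∀ᵐ ω ∂P,
        (P[fun ω' => (1 - Z ω') * Y0 ω'|mG]) ω ≠ 0 →
        (P[fun ω' => (1 - Z ω') * mu0 ω'|mG]) ω ≠ 0 →
        (P[Z|mG]) ω ≠ 0 →
        (P[fun ω' => Z ω' * Y0 ω'|mG]) ω * (P[fun ω' => 1 - Z ω'|mG]) ω
            / ((P[fun ω' => (1 - Z ω') * Y0 ω'|mG]) ω * (P[Z|mG]) ω)
          = (P[fun ω' => Z ω' * mu0 ω'|mG]) ω * (P[fun ω' => 1 - Z ω'|mG]) ω
            / ((P[fun ω' => (1 - Z ω') * mu0 ω'|mG]) ω * (P[Z|mG]) ω)) := by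
  -- basic facts about Z
  have hZ0 : ∀ ω, 0 ≤ Z ω := fun ω => by rcases hZ01 ω with h | h <;> simp [h]
  have hZle : ∀ ω, Z ω ≤ 1 := fun ω => by rcases hZ01 ω with h | h <;> simp [h]
  have hZbd : ∀ᵐ ω ∂P, ‖Z ω‖ ≤ 1 :=
    Filter.Eventually.of_forall fun ω => by
      rw [Real.norm_eq_abs, abs_of_nonneg (hZ0 ω)]; exact hZle ω
  have h1mZbd : ∀ᵐ ω ∂P, ‖1 - Z ω‖ ≤ 1 :=
    Filter.Eventually.of_forall fun ω => by
      rw [Real.norm_eq_abs, abs_of_nonneg (by linarith [hZle ω])]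
      linarith [hZ0 ω]
  have hZint : Integrable Z P :=
    (integrable_const (1 : ℝ)).mono' hZmeas.aestronglyMeasurable (by simpa using hZbd)
  have h1mZae : AEStronglyMeasurable (fun ω => 1 - Z ω) P :=
    aestronglyMeasurable_const.sub hZmeas.aestronglyMeasurable
  -- integrability of the products
  have hZY1int : Integrable (fun ω => Z ω * Y1 ω) P :=
    hY1int.bdd_mul hZmeas.aestronglyMeasurable hZbd
  have hZY0int : Integrable (fun ω => Z ω * Y0 ω) P :=
    hY0int.bdd_mul hZmeas.aestronglyMeasurable hZbd
  -- measurable modifications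
  set Y1' : Ω → ℝ := hY1int.1.mk Y1 with hY1'def
  have hY1'eq : Y1 =ᵐ[P] Y1' := hY1int.1.ae_eq_mk
  have hY1'meas : Measurable Y1' := hY1int.1.stronglyMeasurable_mk.measurable
  set Y0' : Ω → ℝ := hY0int.1.mk Y0 with hY0'def
  have hY0'eq : Y0 =ᵐ[P] Y0' := hY0int.1.ae_eq_mk
  have hY0'meas : Measurable Y0' := hY0int.1.stronglyMeasurable_mk.measurable
  have hWae : (fun ω => (Y1 ω, Y0 ω)) =ᵐ[P] fun ω => (Y1' ω, Y0' ω) := by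
    filter_upwards [hY1'eq, hY0'eq] with ω h1 h0
    rw [h1, h0]
  have hCI : CondIndepFun mX hmX Z (fun ω => (Y1' ω, Y0' ω)) P :=
    condIndepFun_ae_right_aux hmX hunconf hWae
  have hCI1 : CondIndepFun mX hmX Z Y1' P := by
    have h := hCI.comp measurable_id measurable_fst
    exact h
  have hCI0 : CondIndepFun mX hmX Z Y0' P := by
    have h := hCI.comp measurable_id measurable_snd
    exact h
  -- product rule for Y1 and Y0
  have key1 : P[fun ω => Z ω * Y1 ω|mX]
      =ᵐ[P] fun ω => (P[Z|mX]) ω * (P[Y1|mX]) ω := by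
    have hprod := condExp_mul_of_condIndepFun_aux hmX hZmeas hZ01 hY1'meas
      (hY1int.congr hY1'eq) hCI1
    have haux : (fun ω => Z ω * Y1 ω) =ᵐ[P] fun ω => Z ω * Y1' ω := by
      filter_upwards [hY1'eq] with ω h; rw [h]
    have hcond : P[Y1'|mX] =ᵐ[P] P[Y1|mX] := condExp_congr_ae hY1'eq.symm
    calc P[fun ω => Z ω * Y1 ω|mX] =ᵐ[P] P[fun ω => Z ω * Y1' ω|mX] := condExp_congr_ae haux
      _ =ᵐ[P] fun ω => (P[Z|mX]) ω * (P[Y1'|mX]) ω := hprod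
      _ =ᵐ[P] fun ω => (P[Z|mX]) ω * (P[Y1|mX]) ω := by
          filter_upwards [hcond] with ω h; rw [h]
  have key0 : P[fun ω => Z ω * Y0 ω|mX]
      =ᵐ[P] fun ω => (P[Z|mX]) ω * (P[Y0|mX]) ω := by
    have hprod := condExp_mul_of_condIndepFun_aux hmX hZmeas hZ01 hY0'meas
      (hY0int.congr hY0'eq) hCI0
    have haux : (fun ω => Z ω * Y0 ω) =ᵐ[P] fun ω => Z ω * Y0' ω := by
      filter_upwards [hY0'eq] with ω h; rw [h]
    have hcond : P[Y0'|mX] =ᵐ[P] P[Y0|mX] := condExp_congr_ae hY0'eq.symm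
    calc P[fun ω => Z ω * Y0 ω|mX] =ᵐ[P] P[fun ω => Z ω * Y0' ω|mX] := condExp_congr_ae haux
      _ =ᵐ[P] fun ω => (P[Z|mX]) ω * (P[Y0'|mX]) ω := hprod
      _ =ᵐ[P] fun ω => (P[Z|mX]) ω * (P[Y0|mX]) ω := by
          filter_upwards [hcond] with ω h; rw [h]
  -- subtracted versions
  have key1' : P[fun ω => (1 - Z ω) * Y1 ω|mX]
      =ᵐ[P] fun ω => (P[Y1|mX]) ω - (P[Z|mX]) ω * (P[Y1|mX]) ω := by
    have hfun : (fun ω => (1 - Z ω) * Y1 ω) = fun ω => Y1 ω - Z ω * Y1 ω := by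
      funext ω; ring
    have hsub := condExp_sub (μ := P) (m := mX) hY1int hZY1int
    rw [hfun]
    refine hsub.trans ?_
    filter_upwards [key1] with ω h
    simp only [Pi.sub_apply]
    rw [h]
  have key0' : P[fun ω => (1 - Z ω) * Y0 ω|mX]
      =ᵐ[P] fun ω => (P[Y0|mX]) ω - (P[Z|mX]) ω * (P[Y0|mX]) ω := by
    have hfun : (fun ω => (1 - Z ω) * Y0 ω) = fun ω => Y0 ω - Z ω * Y0 ω := by
      funext ω; ring
    have hsub := condExp_sub (μ := P) (m := mX) hY0int hZY0int
    rw [hfun]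
    refine hsub.trans ?_
    filter_upwards [key0] with ω h
    simp only [Pi.sub_apply]
    rw [h]
  -- pointwise identities relating Y to Y1, Y0
  have hZY : (fun ω => Z ω * Y ω) = fun ω => Z ω * Y1 ω := by
    funext ω; rcases hZ01 ω with h | h <;> simp [hYdef ω, h]
  have h1ZY : (fun ω => (1 - Z ω) * Y ω) = fun ω => (1 - Z ω) * Y0 ω := by
    funext ω; rcases hZ01 ω with h | h <;> simp [hYdef ω, h]
  -- mu1 and mu0 agree with the conditional means
  have hmu1nu : mu1 =ᵐ[P] P[Y1|mX] := by
    have hZYc : P[fun ω => Z ω * Y ω|mX]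
        =ᵐ[P] fun ω => (P[Z|mX]) ω * (P[Y1|mX]) ω := by rw [hZY]; exact key1
    have h := hmu1.trans hZYc
    filter_upwards [h, heX, hov] with ω h1 h2 h3
    have hne : eX ω ≠ 0 := ne_of_gt h3.1
    have : mu1 ω * eX ω = (P[Y1|mX]) ω * eX ω := by rw [h1, ← h2]; ring
    exact mul_right_cancel₀ hne this
  have hmu0nu : mu0 =ᵐ[P] P[Y0|mX] := by
    have h1ZYc : P[fun ω => (1 - Z ω) * Y ω|mX]
        =ᵐ[P] fun ω => (P[Y0|mX]) ω - (P[Z|mX]) ω * (P[Y0|mX]) ω := by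
      rw [h1ZY]; exact key0'
    have h := hmu0.trans h1ZYc
    filter_upwards [h, heX, hov] with ω h1 h2 h3
    have hne : 1 - eX ω ≠ 0 := by
      have := h3.2; intro hc; linarith [hc]
    have : mu0 ω * (1 - eX ω) = (P[Y0|mX]) ω * (1 - eX ω) := by
      rw [h1, h2]; ring
    exact mul_right_cancel₀ hne this
  -- conditional expectation of 1 - Z
  have hcond1mZ : P[fun ω => 1 - Z ω|mX] =ᵐ[P] fun ω => 1 - (P[Z|mX]) ω := by
    have hsub := condExp_sub (μ := P) (m := mX) (integrable_const (1 : ℝ)) hZint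
    have hone : P[fun _ : Ω => (1 : ℝ)|mX] = fun _ => (1 : ℝ) := condExp_const hmX 1
    have : (fun ω => 1 - Z ω) = (fun _ : Ω => (1 : ℝ)) - Z := by funext ω; simp
    rw [this]
    refine hsub.trans ?_
    rw [hone]
    filter_upwards with ω
    simp
  -- pull-out identities for mu1 and mu0
  have pull1 : P[fun ω => Z ω * mu1 ω|mX] =ᵐ[P] fun ω => mu1 ω * (P[Z|mX]) ω := by
    have h := condExp_mul_of_stronglyMeasurable_left (μ := P) hmu1meas.stronglyMeasurable
      (by exact hintZmu1.congr (Filter.Eventually.of_forall fun ω => by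
        simp [Pi.mul_apply, mul_comm])) hZint
    have hcomm : (fun ω => Z ω * mu1 ω) =ᵐ[P] mu1 * Z :=
      Filter.Eventually.of_forall fun ω => by simp [Pi.mul_apply, mul_comm]
    exact (condExp_congr_ae hcomm).trans h
  have pull0 : P[fun ω => Z ω * mu0 ω|mX] =ᵐ[P] fun ω => mu0 ω * (P[Z|mX]) ω := by
    have h := condExp_mul_of_stronglyMeasurable_left (μ := P) hmu0meas.stronglyMeasurable
      (by exact hintZmu0.congr (Filter.Eventually.of_forall fun ω => by
        simp [Pi.mul_apply, mul_comm])) hZint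
    have hcomm : (fun ω => Z ω * mu0 ω) =ᵐ[P] mu0 * Z :=
      Filter.Eventually.of_forall fun ω => by simp [Pi.mul_apply, mul_comm]
    exact (condExp_congr_ae hcomm).trans h
  have h1mZint : Integrable (fun ω => 1 - Z ω) P := (integrable_const (1 : ℝ)).sub hZint
  have pull1' : P[fun ω => (1 - Z ω) * mu1 ω|mX]
      =ᵐ[P] fun ω => mu1 ω * (1 - (P[Z|mX]) ω) := by
    have h := condExp_mul_of_stronglyMeasurable_left (μ := P) hmu1meas.stronglyMeasurable
      (by exact hint1mZmu1.congr (Filter.Eventually.of_forall fun ω => by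
        simp [Pi.mul_apply, mul_comm])) h1mZint
    have hcomm : (fun ω => (1 - Z ω) * mu1 ω) =ᵐ[P] mu1 * fun ω => 1 - Z ω :=
      Filter.Eventually.of_forall fun ω => by simp [Pi.mul_apply, mul_comm]
    refine ((condExp_congr_ae hcomm).trans h).trans ?_
    filter_upwards [hcond1mZ] with ω hω
    simp only [Pi.mul_apply]
    rw [hω]
  have pull0' : P[fun ω => (1 - Z ω) * mu0 ω|mX]
      =ᵐ[P] fun ω => mu0 ω * (1 - (P[Z|mX]) ω) := by
    have h := condExp_mul_of_stronglyMeasurable_left (μ := P) hmu0meas.stronglyMeasurable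
      (by exact hint1mZmu0.congr (Filter.Eventually.of_forall fun ω => by
        simp [Pi.mul_apply, mul_comm])) h1mZint
    have hcomm : (fun ω => (1 - Z ω) * mu0 ω) =ᵐ[P] mu0 * fun ω => 1 - Z ω :=
      Filter.Eventually.of_forall fun ω => by simp [Pi.mul_apply, mul_comm]
    refine ((condExp_congr_ae hcomm).trans h).trans ?_
    filter_upwards [hcond1mZ] with ω hω
    simp only [Pi.mul_apply]
    rw [hω]
  -- the four identities at level mX
  have E1 : P[fun ω => Z ω * Y1 ω|mX] =ᵐ[P] P[fun ω => Z ω * mu1 ω|mX] := by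
    refine key1.trans ?_
    refine (Filter.EventuallyEq.symm ?_)
    refine pull1.trans ?_
    filter_upwards [hmu1nu] with ω h
    rw [h]; ring
  have E2 : P[fun ω => (1 - Z ω) * Y1 ω|mX] =ᵐ[P] P[fun ω => (1 - Z ω) * mu1 ω|mX] := by
    refine key1'.trans ?_
    refine (Filter.EventuallyEq.symm ?_)
    refine pull1'.trans ?_
    filter_upwards [hmu1nu] with ω h
    rw [h]; ring
  have E3 : P[fun ω => Z ω * Y0 ω|mX] =ᵐ[P] P[fun ω => Z ω * mu0 ω|mX] := by
    refine key0.trans ?_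
    refine (Filter.EventuallyEq.symm ?_)
    refine pull0.trans ?_
    filter_upwards [hmu0nu] with ω h
    rw [h]; ring
  have E4 : P[fun ω => (1 - Z ω) * Y0 ω|mX] =ᵐ[P] P[fun ω => (1 - Z ω) * mu0 ω|mX] := by
    refine key0'.trans ?_
    refine (Filter.EventuallyEq.symm ?_)
    refine pull0'.trans ?_
    filter_upwards [hmu0nu] with ω h
    rw [h]; ring
  -- lift to mG via the tower property
  have lift : ∀ {f g : Ω → ℝ}, P[f|mX] =ᵐ[P] P[g|mX] → P[f|mG] =ᵐ[P] P[g|mG] := by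
    intro f g h
    exact (condExp_condExp_of_le hmG hmX).symm.trans
      ((condExp_congr_ae h).trans (condExp_condExp_of_le hmG hmX))
  have G1 := lift E1
  have G2 := lift E2
  have G3 := lift E3
  have G4 := lift E4
  refine ⟨G1, G2, G3, G4, ?_, ?_⟩
  · filter_upwards [G1, G2] with ω h1 h2 _ _ _
    rw [h1, h2]
  · filter_upwards [G3, G4] with ω h3 h4 _ _ _
    rw [h3, h4]

/-- Calibration identity under unconfoundedness (Section 4.1). -/
theorem calibration_under_unconfoundedness
    {Ω : Type*} [F : MeasurableSpace Ω] [StandardBorelSpace Ω]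
    (P : Measure Ω) [IsProbabilityMeasure P]
    (Z Y1 Y0 Y : Ω → ℝ)
    (hZmeas : Measurable Z) (hZ01 : ∀ ω, Z ω = 0 ∨ Z ω = 1)
    (hY1int : Integrable Y1 P) (hY0int : Integrable Y0 P)
    (hYdef : ∀ ω, Y ω = Z ω * Y1 ω + (1 - Z ω) * Y0 ω)
    (mX : MeasurableSpace Ω) (hmX : mX ≤ F)
    (eX : Ω → ℝ) (heXmeas : Measurable[mX] eX) (heX : eX =ᵐ[P] P[Z|mX])
    (hov : ∀ᵐ ω ∂P, 0 < eX ω ∧ eX ω < 1)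
    (mu1 mu0 : Ω → ℝ) (hmu1meas : Measurable[mX] mu1) (hmu0meas : Measurable[mX] mu0)
    (hmu1 : (fun ω => mu1 ω * eX ω) =ᵐ[P] P[fun ω => Z ω * Y ω|mX])
    (hmu0 : (fun ω => mu0 ω * (1 - eX ω)) =ᵐ[P] P[fun ω => (1 - Z ω) * Y ω|mX])
    (hunconf : ProbabilityTheory.CondIndepFun mX hmX Z (fun ω => (Y1 ω, Y0 ω)) P)
    (mG : MeasurableSpace Ω) (hmG : mG ≤ mX)
    (hintZmu1 : Integrable (fun ω => Z ω * mu1 ω) P)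
    (hintZmu0 : Integrable (fun ω => Z ω * mu0 ω) P)
    (hint1mZmu1 : Integrable (fun ω => (1 - Z ω) * mu1 ω) P)
    (hint1mZmu0 : Integrable (fun ω => (1 - Z ω) * mu0 ω) P) :
    (P[fun ω => Z ω * Y1 ω|mG] =ᵐ[P] P[fun ω => Z ω * mu1 ω|mG])
    ∧ (P[fun ω => (1 - Z ω) * Y1 ω|mG] =ᵐ[P] P[fun ω => (1 - Z ω) * mu1 ω|mG])
    ∧ (P[fun ω => Z ω * Y0 ω|mG] =ᵐ[P] P[fun ω => Z ω * mu0 ω|mG])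
    ∧ (P[fun ω => (1 - Z ω) * Y0 ω|mG] =ᵐ[P] P[fun ω => (1 - Z ω) * mu0 ω|mG])
    ∧ (∀ᵐ ω ∂P,
        (P[fun ω' => (1 - Z ω') * Y1 ω'|mG]) ω ≠ 0 →
        (P[fun ω' => (1 - Z ω') * mu1 ω'|mG]) ω ≠ 0 →
        (P[Z|mG]) ω ≠ 0 →
        (P[fun ω' => Z ω' * Y1 ω'|mG]) ω * (P[fun ω' => 1 - Z ω'|mG]) ω
            / ((P[fun ω' => (1 - Z ω') * Y1 ω'|mG]) ω * (P[Z|mG]) ω)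
          = (P[fun ω' => Z ω' * mu1 ω'|mG]) ω * (P[fun ω' => 1 - Z ω'|mG]) ω
            / ((P[fun ω' => (1 - Z ω') * mu1 ω'|mG]) ω * (P[Z|mG]) ω))
    ∧ (∀ᵐ ω ∂P,
        (P[fun ω' => (1 - Z ω') * Y0 ω'|mG]) ω ≠ 0 →
        (P[fun ω' => (1 - Z ω') * mu0 ω'|mG]) ω ≠ 0 →
        (P[Z|mG]) ω ≠ 0 →
        (P[fun ω' => Z ω' * Y0 ω'|mG]) ω * (P[fun ω' => 1 - Z ω'|mG]) ω
            / ((P[fun ω' => (1 - Z ω') * Y0 ω'|mG]) ω * (P[Z|mG]) ω)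
          = (P[fun ω' => Z ω' * mu0 ω'|mG]) ω * (P[fun ω' => 1 - Z ω'|mG]) ω
            / ((P[fun ω' => (1 - Z ω') * mu0 ω'|mG]) ω * (P[Z|mG]) ω)) := by
  exact calibration_master (mX := mX) (mG := mG) (F := F) P Z Y1 Y0 Y hZmeas hZ01
    hY1int hY0int hYdef hmX eX heX hov mu1 mu0 hmu1meas hmu0meas hmu1 hmu0 hunconf hmG
    hintZmu1 hintZmu0 hint1mZmu1 hint1mZmu0
end
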